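/- arXiv:2406.16647 — 5 statements merged into one kernel-verified Lean document; each statement's English description precedes it below -/
import Mathlib

section
/- For every h ∈ ℕ, every c ∈ {0, 1, 2}, and all integers t, k ≥ 1, the Dyck grid D^{(h,c)}_{tk} contains a half-integral packing of size k of copies of D^{(h,c)}_t; that is, there are k subgraphs of D^{(h,c)}_{tk}, each containing D^{(h,c)}_t as a minor, such that every vertex belongs to at most two of them. (Proposition 2.3 of the paper.) -/
open SimpleGraph

/-- `H` is a minor of `G`: there is a family of pairwise disjoint nonempty subsets of `V(G)`,
one for each vertex of `H`, each inducing a connected subgraph of `G`, such that every edge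
of `H` is realized by an edge of `G` between the corresponding branch sets. -/
def IsMinorOf {V : Type*} {W : Type*} (H : SimpleGraph V) (G : SimpleGraph W) : Prop :=
  ∃ X : V → Set W,
    (∀ a, (X a).Nonempty) ∧
    (∀ a b, a ≠ b → Disjoint (X a) (X b)) ∧
    (∀ a, (G.induce (X a)).Connected) ∧
    ∀ a b, H.Adj a b → ∃ x ∈ X a, ∃ y ∈ X b, G.Adj x y

/-- A half-integral `H`-packing of size `k` in `G` : `k` subgraphs of `G`, each containing `H`
as a minor, such that every vertex of `G` belongs to at most two of them. -/
def HasHalfPacking {V : Type*} {W : Type*} (H : SimpleGraph V) (G : SimpleGraph W)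
    (k : ℕ) : Prop :=
  ∃ M : Fin k → G.Subgraph,
    (∀ w : W, ({i : Fin k | w ∈ (M i).verts}).ncard ≤ 2) ∧
    ∀ i, IsMinorOf H ((M i).coe)

/-- The adjacency relation of the `(m, n)`-cylindrical grid: the Cartesian product of a path on
`m` vertices with a cycle on `n` vertices.  Vertex `v^i_j` is `(i, j)` (0-based first index,
second index taken in `ZMod n`). -/
def cylRel (m n : ℕ) (p q : Fin m × ZMod n) : Prop :=
  (p.1 = q.1 ∧ q.2 = p.2 + 1) ∨ (p.2 = q.2 ∧ (p.1 : ℕ) + 1 = (q.1 : ℕ))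

/-- The Dyck grid `D^{(h,c)}_k`: the `(k, 4k(1+h+c))`-cylindrical grid together with, for each
position `pos ∈ {2, …, h+1}`, the handle edges
`v^1_{4k(pos−1)+j} v^1_{4k(pos−1)+3k−j+1}` and `v^1_{4k(pos−1)+k+j} v^1_{4k(pos−1)+4k−j+1}`
(`j ∈ [k]`), and for each position `pos ∈ {h+2, …, h+1+c}` the cross-cap edges
`v^1_{4k(pos−1)+j} v^1_{4k(pos−1)+2k+j}` (`j ∈ [2k]`), all on the first cycle. -/
def dyckGrid (h c k : ℕ) : SimpleGraph (Fin k × ZMod (4 * k * (1 + h + c))) :=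
  SimpleGraph.fromRel fun p q =>
    cylRel k (4 * k * (1 + h + c)) p q ∨
    ((p.1 : ℕ) = 0 ∧ (q.1 : ℕ) = 0 ∧
      ((∃ pos : ℕ, 2 ≤ pos ∧ pos ≤ h + 1 ∧ ∃ j : ℕ, 1 ≤ j ∧ j ≤ k ∧
          ((p.2 = ((4 * k * (pos - 1) + j : ℕ) : ZMod (4 * k * (1 + h + c))) ∧
            q.2 = ((4 * k * (pos - 1) + 3 * k - j + 1 : ℕ) : ZMod (4 * k * (1 + h + c)))) ∨
           (p.2 = ((4 * k * (pos - 1) + k + j : ℕ) : ZMod (4 * k * (1 + h + c))) ∧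
            q.2 = ((4 * k * (pos - 1) + 4 * k - j + 1 : ℕ) : ZMod (4 * k * (1 + h + c)))))) ∨
       (∃ pos : ℕ, h + 2 ≤ pos ∧ pos ≤ h + 1 + c ∧ ∃ j : ℕ, 1 ≤ j ∧ j ≤ 2 * k ∧
          (p.2 = ((4 * k * (pos - 1) + j : ℕ) : ZMod (4 * k * (1 + h + c))) ∧
           q.2 = ((4 * k * (pos - 1) + 2 * k + j : ℕ) : ZMod (4 * k * (1 + h + c)))))))

namespace Aux4

open Classical in
/-- `a` is a column in the second half of some handle block. -/
noncomputable def Cnd (h c t : ℕ) (a : ZMod (4 * t * (1 + h + c))) : Prop :=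
  ∃ pos : ℕ, 2 ≤ pos ∧ pos ≤ h + 1 ∧ ∃ u : ℕ, 2*t+1 ≤ u ∧ u ≤ 4*t ∧
    a = ((4*t*(pos-1) + u : ℕ) : ZMod (4 * t * (1 + h + c)))

open Classical in
noncomputable def off (h c t k i : ℕ) (a : ZMod (4 * t * (1 + h + c))) : ℕ :=
  if Cnd h c t a then k - 1 - i else i

/-- The column at offset `s` (from the right end) of the block of column `jv`. -/
def bcol (h c t k : ℕ) (jv s : ℕ) : ZMod (4 * (t*k) * (1 + h + c)) :=
  ((k * jv + 4 * (t*k) * (1 + h + c) - s : ℕ) : ZMod (4 * (t*k) * (1 + h + c)))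

noncomputable def tcol (h c t k i : ℕ) (a : ZMod (4 * t * (1 + h + c))) :
    ZMod (4 * (t*k) * (1 + h + c)) :=
  bcol h c t k a.val (off h c t k i a)

/-- Vertex set of the `i`-th copy. -/
noncomputable def Sset (h c t k i : ℕ) : Set (Fin (t*k) × ZMod (4 * (t*k) * (1 + h + c))) :=
  {p | (i*t ≤ p.1.val ∧ p.1.val < i*t + t) ∨
       (p.1.val ≤ i*t ∧ ∃ a : ZMod (4 * t * (1 + h + c)), p.2 = tcol h c t k i a)}

/-- Branch set of vertex `(r, j)` in the `i`-th copy. -/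
noncomputable def Xset (h c t k i : ℕ) (r : Fin t) (j : ZMod (4 * t * (1 + h + c))) :
    Set (Fin (t*k) × ZMod (4 * (t*k) * (1 + h + c))) :=
  {p | (p.1.val = i*t + r.val ∧ ∃ s : ℕ, s < k ∧ p.2 = bcol h c t k j.val s) ∨
       (r.val = 0 ∧ p.1.val ≤ i*t ∧ p.2 = tcol h c t k i j)}

noncomputable def Msub (h c t k i : ℕ) : (dyckGrid h c (t*k)).Subgraph where
  verts := Sset h c t k i
  Adj x y := x ∈ Sset h c t k i ∧ y ∈ Sset h c t k i ∧ (dyckGrid h c (t*k)).Adj x y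
  adj_sub := fun hxy => hxy.2.2
  edge_vert := fun hxy => hxy.1
  symm := ⟨fun x y ⟨ha, hb, hab⟩ => ⟨hb, ha, hab.symm⟩⟩

section Facts

variable {h c t k : ℕ}

lemma nn_pos (ht : 1 ≤ t) : 0 < 4 * t * (1 + h + c) :=
  Nat.mul_pos (by omega) (by omega)

lemma NN_pos (ht : 1 ≤ t) (hk : 1 ≤ k) : 0 < 4 * (t*k) * (1 + h + c) :=
  Nat.mul_pos (by have := Nat.mul_le_mul ht hk; omega) (by omega)

lemma NN_eq : 4 * (t*k) * (1 + h + c) = k * (4 * t * (1 + h + c)) := by ring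

lemma k_le_NN (ht : 1 ≤ t) : k ≤ 4 * (t*k) * (1 + h + c) := by
  have h1 : k * 1 ≤ k * (4 * t * (1 + h + c)) :=
    Nat.mul_le_mul_left k (nn_pos (h := h) (c := c) ht)
  rw [NN_eq]; omega

lemma NN_gt_one (ht : 1 ≤ t) (hk : 1 ≤ k) : 1 < 4 * (t*k) * (1 + h + c) := by
  have h1 : 1*1 ≤ t*k := Nat.mul_le_mul ht hk
  have h2 : 4*(1*1) ≤ 4*(t*k) := by omega
  have h3 : (4*(t*k)) * 1 ≤ (4*(t*k)) * (1+h+c) := Nat.mul_le_mul_left _ (by omega)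
  omega

lemma cast_ne (ht : 1 ≤ t) (hk : 1 ≤ k) {u v : ℕ} (huv : u < v)
    (hd : v - u < 4 * (t*k) * (1 + h + c)) :
    (u : ZMod (4 * (t*k) * (1 + h + c))) ≠ (v : ZMod (4 * (t*k) * (1 + h + c))) := by
  intro he
  have h1 : u ≡ v [MOD 4 * (t*k) * (1 + h + c)] := (ZMod.natCast_eq_natCast_iff _ _ _).mp he
  have h2 : 4 * (t*k) * (1 + h + c) ∣ v - u := (Nat.modEq_iff_dvd' (le_of_lt huv)).mp h1
  have h3 := Nat.le_of_dvd (by omega) h2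
  omega

lemma cast_inj_nat (ht : 1 ≤ t) (hk : 1 ≤ k) {u v : ℕ}
    (hu : u < 4 * (t*k) * (1 + h + c)) (hv : v < 4 * (t*k) * (1 + h + c))
    (he : (u : ZMod (4 * (t*k) * (1 + h + c))) = (v : ZMod (4 * (t*k) * (1 + h + c)))) :
    u = v := by
  by_contra hne
  rcases Nat.lt_or_ge u v with hlt | hge
  · exact cast_ne ht hk hlt (by omega) he
  · exact cast_ne ht hk (by omega : v < u) (by omega) he.symm

lemma mulmod (A : ℕ) :
    ((k * (A % (4 * t * (1 + h + c))) : ℕ) : ZMod (4 * (t*k) * (1 + h + c))) =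
      ((k * A : ℕ) : ZMod (4 * (t*k) * (1 + h + c))) := by
  have h1 : k * A = k * (A % (4 * t * (1 + h + c)))
      + (4 * (t*k) * (1 + h + c)) * (A / (4 * t * (1 + h + c))) := by
    calc k * A = k * (A % (4 * t * (1 + h + c)) + (4 * t * (1 + h + c)) * (A / (4 * t * (1 + h + c)))) := by
          rw [Nat.mod_add_div]
      _ = _ := by ring
  rw [h1]
  have hz : ((4 * (t*k) * (1 + h + c) : ℕ) : ZMod (4 * (t*k) * (1 + h + c))) = 0 :=
    ZMod.natCast_self _
  push_cast
  push_cast at hz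
  linear_combination (-(((A / (4 * t * (1 + h + c))) : ℕ) : ZMod (4 * (t*k) * (1 + h + c)))) * hz

lemma bcol_eq (ht : 1 ≤ t) {s : ℕ} (hs : s ≤ 4 * (t*k) * (1 + h + c)) (jv : ℕ) :
    bcol h c t k jv s = ((k * jv : ℕ) : ZMod (4 * (t*k) * (1 + h + c)))
      - (s : ZMod (4 * (t*k) * (1 + h + c))) := by
  unfold bcol
  have h1 : k * jv + 4 * (t*k) * (1 + h + c) - s = k * jv + (4 * (t*k) * (1 + h + c) - s) := by
    omega
  rw [h1]
  have hz : ((4 * (t*k) * (1 + h + c) : ℕ) : ZMod (4 * (t*k) * (1 + h + c))) = 0 :=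
    ZMod.natCast_self _
  push_cast [Nat.cast_sub hs]
  push_cast at hz
  linear_combination hz

lemma bcol_cast (ht : 1 ≤ t) (hk : 1 ≤ k) {s : ℕ} (hs : s ≤ 4 * (t*k) * (1 + h + c)) (A : ℕ) :
    bcol h c t k ((A : ZMod (4 * t * (1 + h + c)))).val s
      = ((k * A : ℕ) : ZMod (4 * (t*k) * (1 + h + c)))
        - (s : ZMod (4 * (t*k) * (1 + h + c))) := by
  haveI : NeZero (4 * t * (1 + h + c)) := ⟨(nn_pos (h := h) (c := c) ht).ne'⟩
  rw [bcol_eq ht hs, ZMod.val_natCast, mulmod]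

lemma bcol_cast_sub (ht : 1 ≤ t) (hk : 1 ≤ k) {s A : ℕ} (hsA : s ≤ k * A)
    (hs : s ≤ 4 * (t*k) * (1 + h + c)) :
    bcol h c t k ((A : ZMod (4 * t * (1 + h + c)))).val s
      = ((k * A - s : ℕ) : ZMod (4 * (t*k) * (1 + h + c))) := by
  rw [bcol_cast ht hk hs, Nat.cast_sub hsA]

lemma bcol_inj (ht : 1 ≤ t) (hk : 1 ≤ k) {u v s r : ℕ}
    (hu : u < 4 * t * (1 + h + c)) (hv : v < 4 * t * (1 + h + c))
    (hs : s < k) (hr : r < k)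
    (he : bcol h c t k u s = bcol h c t k v r) : u = v ∧ s = r := by
  have hsN : s ≤ 4 * (t*k) * (1 + h + c) := le_trans (le_of_lt hs) (k_le_NN ht)
  have hrN : r ≤ 4 * (t*k) * (1 + h + c) := le_trans (le_of_lt hr) (k_le_NN ht)
  rw [bcol_eq ht hsN, bcol_eq ht hrN] at he
  have he2 : ((k * u + r : ℕ) : ZMod (4 * (t*k) * (1 + h + c)))
      = ((k * v + s : ℕ) : ZMod (4 * (t*k) * (1 + h + c))) := by
    push_cast
    push_cast at he
    linear_combination he
  have hmulu : k * u + r < 4 * (t*k) * (1 + h + c) := by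
    have : k * (u+1) ≤ k * (4 * t * (1 + h + c)) := Nat.mul_le_mul_left k (by omega)
    have h2 : k * (u+1) = k*u + k := by ring
    rw [NN_eq]; omega
  have hmulv : k * v + s < 4 * (t*k) * (1 + h + c) := by
    have : k * (v+1) ≤ k * (4 * t * (1 + h + c)) := Nat.mul_le_mul_left k (by omega)
    have h2 : k * (v+1) = k*v + k := by ring
    rw [NN_eq]; omega
  have he3 : k * u + r = k * v + s := cast_inj_nat ht hk hmulu hmulv he2
  have huv : u = v := by
    rcases lt_trichotomy u v with hlt | heq | hgt
    · have : k * (u+1) ≤ k * v := Nat.mul_le_mul_left k hlt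
      have h2 : k * (u+1) = k*u + k := by ring
      omega
    · exact heq
    · have : k * (v+1) ≤ k * u := Nat.mul_le_mul_left k hgt
      have h2 : k * (v+1) = k*v + k := by ring
      omega
  subst huv
  omega

lemma off_lt (hk : 1 ≤ k) {i : ℕ} (hik : i < k) (a : ZMod (4 * t * (1 + h + c))) :
    off h c t k i a < k := by
  unfold off; split <;> omega

lemma tcol_inj (ht : 1 ≤ t) (hk : 1 ≤ k) {i₁ i₂ : ℕ} (hi₁ : i₁ < k) (hi₂ : i₂ < k)
    {a₁ a₂ : ZMod (4 * t * (1 + h + c))}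
    (he : tcol h c t k i₁ a₁ = tcol h c t k i₂ a₂) : i₁ = i₂ ∧ a₁ = a₂ := by
  haveI : NeZero (4 * t * (1 + h + c)) := ⟨(nn_pos (h := h) (c := c) ht).ne'⟩
  obtain ⟨hval, hoff⟩ := bcol_inj ht hk (ZMod.val_lt a₁) (ZMod.val_lt a₂)
    (off_lt hk hi₁ a₁) (off_lt hk hi₂ a₂) he
  have ha : a₁ = a₂ := ZMod.val_injective _ hval
  subst ha
  refine ⟨?_, rfl⟩
  unfold off at hoff
  split at hoff <;> omega

lemma row_lt (ht : 1 ≤ t) {i rv : ℕ} (hik : i < k) (hrv : rv < t) : i*t + rv < t*k := by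
  have h1 : (i+1)*t ≤ k*t := Nat.mul_le_mul_right t (by omega)
  have h2 : (i+1)*t = i*t + t := by ring
  have h3 : k*t = t*k := Nat.mul_comm k t
  omega

lemma Xsub_S {i : ℕ} (r : Fin t) (j : ZMod (4 * t * (1 + h + c))) :
    Xset h c t k i r j ⊆ Sset h c t k i := by
  rintro p (⟨hrow, s, hs, hcol⟩ | ⟨hr0, hrow, hcol⟩)
  · exact Or.inl ⟨by omega, by omega⟩
  · exact Or.inr ⟨hrow, j, hcol⟩

lemma hadjG (ht : 1 ≤ t) (hk : 1 ≤ k) (row : Fin (t*k)) (u : ℕ) :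
    (dyckGrid h c (t*k)).Adj (row, (u : ZMod (4 * (t*k) * (1 + h + c))))
      (row, ((u+1 : ℕ) : ZMod (4 * (t*k) * (1 + h + c)))) := by
  unfold dyckGrid
  rw [SimpleGraph.fromRel_adj]
  constructor
  · intro he
    have h2 := congrArg Prod.snd he
    exact cast_ne ht hk (Nat.lt_succ_self u)
      (by have := NN_gt_one (h := h) (c := c) ht hk; omega) h2
  · left; left; left
    exact ⟨rfl, by push_cast; ring⟩

lemma vadjG (col : ZMod (4 * (t*k) * (1 + h + c))) (u : ℕ) (hu : u + 1 < t*k) :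
    (dyckGrid h c (t*k)).Adj (⟨u, by omega⟩, col) (⟨u+1, hu⟩, col) := by
  unfold dyckGrid
  rw [SimpleGraph.fromRel_adj]
  refine ⟨?_, Or.inl (Or.inl (Or.inr ⟨rfl, rfl⟩))⟩
  intro he
  have h2 := congrArg (fun p => (p.1 : Fin (t*k)).val) he
  simp at h2

lemma bcol_adj (ht : 1 ≤ t) (hk : 1 ≤ k) (row : Fin (t*k)) (jv s : ℕ)
    (h1 : 1 ≤ s) (h2 : s ≤ k) :
    (dyckGrid h c (t*k)).Adj (row, bcol h c t k jv s) (row, bcol h c t k jv (s-1)) := by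
  have hkN := k_le_NN (h := h) (c := c) (k := k) ht
  have harg : k*jv + 4 * (t*k) * (1 + h + c) - (s-1) = (k*jv + 4 * (t*k) * (1 + h + c) - s) + 1 := by
    omega
  have hh := hadjG (h := h) (c := c) ht hk row (k*jv + 4 * (t*k) * (1 + h + c) - s)
  unfold bcol
  rw [harg]
  exact hh

lemma cnd_intro {pos u : ℕ} (hpos1 : 2 ≤ pos) (hpos2 : pos ≤ h+1)
    (hu1 : 2*t+1 ≤ u) (hu2 : u ≤ 4*t) :
    Cnd h c t ((4*t*(pos-1) + u : ℕ) : ZMod (4 * t * (1 + h + c))) :=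
  ⟨pos, hpos1, hpos2, u, hu1, hu2, rfl⟩

lemma notC1 (ht : 1 ≤ t) {A : ℕ} (h1 : 1 ≤ A % (4*t)) (h2 : A % (4*t) ≤ 2*t) :
    ¬ Cnd h c t (A : ZMod (4 * t * (1 + h + c))) := by
  rintro ⟨pos, hp1, hp2, u, hu1, hu2, heq⟩
  have hmod : A ≡ 4*t*(pos-1) + u [MOD 4*t*(1+h+c)] :=
    (ZMod.natCast_eq_natCast_iff _ _ _).mp heq
  have hdvd : (4*t) ∣ 4*t*(1+h+c) := ⟨1+h+c, rfl⟩
  have hmod2 : A % (4*t) = (4*t*(pos-1) + u) % (4*t) := Nat.ModEq.of_dvd hdvd hmod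
  have h3 : (4*t*(pos-1) + u) % (4*t) = u % (4*t) := by
    have he : 4*t*(pos-1) + u = u + (pos-1)*(4*t) := by ring
    rw [he, Nat.add_mul_mod_self_right]
  rcases eq_or_lt_of_le hu2 with he | hlt
  · have h5 : u % (4*t) = 0 := by rw [← he]; exact Nat.mod_self u
    omega
  · have h5 : u % (4*t) = u := Nat.mod_eq_of_lt hlt
    omega

lemma notC2 (ht : 1 ≤ t) {B : ℕ} (h1 : 4*t*(h+1) < B) (h2 : B ≤ 4*t*(1+h+c)) :
    ¬ Cnd h c t (B : ZMod (4 * t * (1 + h + c))) := by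
  rintro ⟨pos, hp1, hp2, u, hu1, hu2, heq⟩
  have hmod : B ≡ 4*t*(pos-1) + u [MOD 4*t*(1+h+c)] :=
    (ZMod.natCast_eq_natCast_iff _ _ _).mp heq
  have hb1 : 4*t*(pos-1) ≤ 4*t*h := Nat.mul_le_mul_left _ (by omega)
  have hb2 : 4*t*h + 4*t = 4*t*(h+1) := by ring
  have hb3 : 4*t*(h+1) ≤ 4*t*(1+h+c) := Nat.mul_le_mul_left _ (by omega)
  have hlt : 4*t*(pos-1) + u < B := by omega
  have hdvd : 4*t*(1+h+c) ∣ B - (4*t*(pos-1)+u) :=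
    (Nat.modEq_iff_dvd' (le_of_lt hlt)).mp hmod.symm
  have hle := Nat.le_of_dvd (by omega) hdvd
  omega

lemma chain_connected {V : Type*} (G : SimpleGraph V) (s : Set V) (m : ℕ) (f : ℕ → V)
    (hmem : ∀ i, i ≤ m → f i ∈ s)
    (hadj : ∀ i, i < m → f i = f (i+1) ∨ G.Adj (f i) (f (i+1)))
    (hsurj : ∀ x ∈ s, ∃ i, i ≤ m ∧ f i = x) :
    (G.induce s).Connected := by
  have h0 : f 0 ∈ s := hmem 0 (Nat.zero_le m)
  have key : ∀ i, ∀ hi : i ≤ m, (G.induce s).Reachable ⟨f 0, h0⟩ ⟨f i, hmem i hi⟩ := by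
    intro i
    induction i with
    | zero => intro _; exact SimpleGraph.Reachable.refl _
    | succ p ih =>
      intro hi
      have hp : p ≤ m := by omega
      refine (ih hp).trans ?_
      rcases hadj p (by omega) with he | ha
      · have h4 : (⟨f p, hmem p hp⟩ : ↥s) = ⟨f (p+1), hmem _ hi⟩ := Subtype.ext he
        rw [h4]
      · exact SimpleGraph.Adj.reachable ha
  rw [SimpleGraph.connected_iff]
  refine ⟨?_, ⟨⟨f 0, h0⟩⟩⟩
  intro x y
  obtain ⟨ix, hix, hfx⟩ := hsurj x.1 x.2
  obtain ⟨iy, hiy, hfy⟩ := hsurj y.1 y.2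
  have hx : (⟨f ix, hmem ix hix⟩ : ↥s) = x := Subtype.ext hfx
  have hy : (⟨f iy, hmem iy hiy⟩ : ↥s) = y := Subtype.ext hfy
  rw [← hx, ← hy]
  exact (key ix hix).symm.trans (key iy hiy)


lemma msub_coe_adj {i : ℕ} (x y : ↥((Msub h c t k i).verts))
    (hxy : (dyckGrid h c (t*k)).Adj x.1 y.1) : (Msub h c t k i).coe.Adj x y := by
  rw [SimpleGraph.Subgraph.coe_adj]
  exact ⟨x.2, y.2, hxy⟩

lemma conn_X (ht : 1 ≤ t) (hk : 1 ≤ k) {i : ℕ} (hik : i < k)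
    (r : Fin t) (j : ZMod (4 * t * (1 + h + c))) :
    ((Msub h c t k i).coe.induce
      {x : ↥((Msub h c t k i).verts) | x.1 ∈ Xset h c t k i r j}).Connected := by
  have hit : i*t < t*k := by
    have := row_lt (k := k) ht hik ht
    omega
  by_cases hr : r.val = 0
  · -- the L-shaped branch set of a first-row vertex
    set o := off h c t k i j with ho
    have ho_lt : o < k := off_lt hk hik j
    set z := k - 1 - o with hz
    set g : ℕ → ℕ := fun q =>
      if q ≤ i*t then o else if q ≤ i*t + z then o + (q - i*t)
      else (k-1) - (q - (i*t + z)) with hg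
    have hg_lt : ∀ q, g q < k := by
      intro q; simp only [hg]; split_ifs <;> omega
    have hrow_lt : ∀ q : ℕ, min q (i*t) < t*k := fun q => by omega
    have hS : ∀ q : ℕ, ((⟨min q (i*t), hrow_lt q⟩ : Fin (t*k)),
        bcol h c t k j.val (g q)) ∈ Sset h c t k i := by
      intro q
      by_cases hq : q ≤ i*t
      · refine Or.inr ⟨?_, j, ?_⟩
        · show min q (i*t) ≤ i*t; omega
        · show bcol h c t k j.val (g q) = tcol h c t k i j
          have hgq : g q = o := by simp only [hg]; rw [if_pos hq]
          rw [hgq, ho]; rfl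
      · refine Or.inl ⟨?_, ?_⟩
        · show i*t ≤ min q (i*t); omega
        · show min q (i*t) < i*t + t; omega
    set f : ℕ → ↥((Msub h c t k i).verts) := fun q =>
      ⟨((⟨min q (i*t), hrow_lt q⟩ : Fin (t*k)), bcol h c t k j.val (g q)), hS q⟩ with hf
    apply chain_connected _ _ (i*t + z + (k-1)) f
    · -- membership in the branch set
      intro q hq
      simp only [hf, Set.mem_setOf_eq]
      by_cases hq2 : q ≤ i*t
      · refine Or.inr ⟨hr, ?_, ?_⟩
        · show min q (i*t) ≤ i*t; omega
        · show bcol h c t k j.val (g q) = tcol h c t k i j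
          have hgq : g q = o := by simp only [hg]; rw [if_pos hq2]
          rw [hgq, ho]; rfl
      · refine Or.inl ⟨?_, g q, hg_lt q, rfl⟩
        show min q (i*t) = i*t + r.val
        omega
    · -- chain adjacency
      intro q hq
      right
      apply msub_coe_adj
      simp only [hf]
      by_cases hq2 : q < i*t
      · -- vertical step
        have h1 : g q = g (q+1) := by
          simp only [hg]
          rw [if_pos (by omega : q ≤ i*t), if_pos (by omega : q+1 ≤ i*t)]
        have e1 : (⟨min q (i*t), hrow_lt q⟩ : Fin (t*k)) = ⟨q, by omega⟩ :=
          Fin.ext (by show min q (i*t) = q; omega)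
        have e2 : (⟨min (q+1) (i*t), hrow_lt (q+1)⟩ : Fin (t*k)) = ⟨q+1, by omega⟩ :=
          Fin.ext (by show min (q+1) (i*t) = q+1; omega)
        rw [e1, e2, ← h1]
        exact vadjG _ q (by omega)
      · -- horizontal step along the annulus row
        have erow : (⟨min (q+1) (i*t), hrow_lt (q+1)⟩ : Fin (t*k))
            = ⟨min q (i*t), hrow_lt q⟩ :=
          Fin.ext (by show min (q+1) (i*t) = min q (i*t); omega)
        rw [erow]
        by_cases hq3 : q < i*t + z
        · have hgs : g (q+1) = g q + 1 := by
            simp only [hg]; split_ifs <;> omega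
          rw [hgs]
          have hb := bcol_adj (h := h) (c := c) ht hk ⟨min q (i*t), hrow_lt q⟩ j.val
            (g q + 1) (by omega) (by have := hg_lt (q+1); omega)
          have hb2 : g q + 1 - 1 = g q := by omega
          rw [hb2] at hb
          exact hb.symm
        · have hgq : g q = k - 1 - (q - (i*t + z)) := by
            simp only [hg]; split_ifs <;> omega
          have hgs : g (q+1) = g q - 1 := by
            simp only [hg]; split_ifs <;> omega
          have hg1 : 1 ≤ g q := by
            rw [hgq]; omega
          rw [hgs]
          exact bcol_adj ht hk _ j.val (g q) hg1 (by have := hg_lt q; omega)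
    · -- surjectivity of the chain
      intro x hx
      rcases hx with ⟨hrowe, s, hs, hcol⟩ | ⟨-, hrowle, hcol⟩
      · refine ⟨i*t + z + (k-1-s), by omega, ?_⟩
        apply Subtype.ext
        simp only [hf]
        refine Prod.ext (Fin.ext ?_) ?_
        · show min (i*t + z + (k-1-s)) (i*t) = (x.1.1 : ℕ)
          rw [hrowe, hr]
          omega
        · show bcol h c t k j.val (g (i*t + z + (k-1-s))) = x.1.2
          rw [hcol]
          congr 1
          simp only [hg]; split_ifs <;> omega
      · refine ⟨(x.1.1 : ℕ), by omega, ?_⟩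
        apply Subtype.ext
        simp only [hf]
        refine Prod.ext (Fin.ext ?_) ?_
        · show min ((x.1.1 : ℕ)) (i*t) = (x.1.1 : ℕ)
          omega
        · show bcol h c t k j.val (g ((x.1.1 : ℕ))) = x.1.2
          rw [hcol]
          have hgq : g ((x.1.1 : ℕ)) = o := by
            simp only [hg]; rw [if_pos hrowle]
          rw [hgq, ho]; rfl
  · -- a branch set inside the annulus: a horizontal block
    set rowA : Fin (t*k) := ⟨i*t + r.val, row_lt ht hik r.isLt⟩ with hrowA
    have hS : ∀ q : ℕ, (rowA, bcol h c t k j.val (k-1-q)) ∈ Sset h c t k i := by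
      intro q
      refine Or.inl ⟨?_, ?_⟩
      · show i*t ≤ i*t + r.val; omega
      · show i*t + r.val < i*t + t; have := r.isLt; omega
    set f : ℕ → ↥((Msub h c t k i).verts) := fun q =>
      ⟨(rowA, bcol h c t k j.val (k-1-q)), hS q⟩ with hf
    apply chain_connected _ _ (k-1) f
    · intro q hq
      simp only [hf, Set.mem_setOf_eq]
      exact Or.inl ⟨rfl, k-1-q, by omega, rfl⟩
    · intro q hq
      right
      apply msub_coe_adj
      simp only [hf]
      have harg : k-1-(q+1) = (k-1-q) - 1 := by omega
      rw [harg]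
      exact bcol_adj ht hk rowA j.val (k-1-q) (by omega) (by omega)
    · intro x hx
      rcases hx with ⟨hrowe, s, hs, hcol⟩ | ⟨hr0, -, -⟩
      · refine ⟨k-1-s, by omega, ?_⟩
        apply Subtype.ext
        simp only [hf]
        refine Prod.ext (Fin.ext ?_) ?_
        · show i*t + r.val = (x.1.1 : ℕ)
          omega
        · show bcol h c t k j.val (k-1-(k-1-s)) = x.1.2
          rw [hcol]
          congr 1
          omega
      · exact absurd hr0 hr

lemma realize (ht : 1 ≤ t) (hk : 1 ≤ k) {i : ℕ} (hik : i < k)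
    (a b : Fin t × ZMod (4 * t * (1 + h + c)))
    (hR : cylRel t (4 * t * (1 + h + c)) a b ∨
      ((a.1 : ℕ) = 0 ∧ (b.1 : ℕ) = 0 ∧
        ((∃ pos : ℕ, 2 ≤ pos ∧ pos ≤ h + 1 ∧ ∃ j : ℕ, 1 ≤ j ∧ j ≤ t ∧
            ((a.2 = ((4 * t * (pos - 1) + j : ℕ) : ZMod (4 * t * (1 + h + c))) ∧
              b.2 = ((4 * t * (pos - 1) + 3 * t - j + 1 : ℕ) : ZMod (4 * t * (1 + h + c)))) ∨
             (a.2 = ((4 * t * (pos - 1) + t + j : ℕ) : ZMod (4 * t * (1 + h + c))) ∧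
              b.2 = ((4 * t * (pos - 1) + 4 * t - j + 1 : ℕ) : ZMod (4 * t * (1 + h + c)))))) ∨
         (∃ pos : ℕ, h + 2 ≤ pos ∧ pos ≤ h + 1 + c ∧ ∃ j : ℕ, 1 ≤ j ∧ j ≤ 2 * t ∧
            (a.2 = ((4 * t * (pos - 1) + j : ℕ) : ZMod (4 * t * (1 + h + c))) ∧
             b.2 = ((4 * t * (pos - 1) + 2 * t + j : ℕ) : ZMod (4 * t * (1 + h + c)))))))) :
    ∃ x ∈ Xset h c t k i a.1 a.2, ∃ y ∈ Xset h c t k i b.1 b.2,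
      (dyckGrid h c (t*k)).Adj x y := by
  haveI : NeZero (4 * t * (1 + h + c)) := ⟨(nn_pos (h := h) (c := c) ht).ne'⟩
  have hkN : k ≤ 4 * (t*k) * (1 + h + c) := k_le_NN ht
  have hNN1 : 1 < 4 * (t*k) * (1 + h + c) := NN_gt_one ht hk
  have htk4 : 4*(t*k)*1 ≤ 4 * (t*k) * (1 + h + c) := Nat.mul_le_mul_left _ (by omega)
  have htk1 : 1*1 ≤ t*k := Nat.mul_le_mul ht hk
  have hktc : k*t = t*k := Nat.mul_comm k t
  rcases hR with (⟨hrr, hcc⟩ | ⟨hcc, hrr⟩) | ⟨ha0, hb0, hsp⟩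
  · -- horizontal cycle edge
    have hval : ((a.2.val : ℕ) : ZMod (4 * t * (1 + h + c))) = a.2 := by
      rw [ZMod.natCast_val, ZMod.cast_id]
    have hb2 : b.2 = ((a.2.val + 1 : ℕ) : ZMod (4 * t * (1 + h + c))) := by
      push_cast
      rw [hval, hcc]
    set rowA : Fin (t*k) := ⟨i*t + a.1.val, row_lt ht hik a.1.isLt⟩ with hrA
    refine ⟨(rowA, bcol h c t k a.2.val 0), Or.inl ⟨rfl, 0, by omega, rfl⟩,
      (rowA, bcol h c t k b.2.val (k-1)),
      Or.inl ⟨by show i*t + a.1.val = i*t + b.1.val; rw [hrr], k-1, by omega, rfl⟩, ?_⟩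
    have hzz : ((4 * (t*k) * (1 + h + c) : ℕ) : ZMod (4 * (t*k) * (1 + h + c))) = 0 :=
      ZMod.natCast_self _
    have hex : bcol h c t k a.2.val 0
        = ((k * a.2.val + 4 * (t*k) * (1 + h + c) : ℕ) : ZMod (4 * (t*k) * (1 + h + c))) := by
      unfold bcol
      congr 1
    have hey : bcol h c t k b.2.val (k-1)
        = ((k * a.2.val + 4 * (t*k) * (1 + h + c) + 1 : ℕ)
            : ZMod (4 * (t*k) * (1 + h + c))) := by
      rw [hb2, bcol_cast ht hk (by omega)]
      have hk1 : ((k-1 : ℕ) : ZMod (4 * (t*k) * (1 + h + c)))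
          = (k : ZMod (4 * (t*k) * (1 + h + c))) - 1 := by
        rw [Nat.cast_sub hk, Nat.cast_one]
      rw [hk1]
      push_cast
      push_cast at hzz
      linear_combination -hzz
    rw [hex, hey]
    exact hadjG ht hk rowA _
  · -- vertical path edge
    have hlt2 : i*t + a.1.val + 1 < t*k := by
      have := row_lt (k := k) ht hik b.1.isLt
      omega
    refine ⟨(⟨i*t + a.1.val, by omega⟩, bcol h c t k a.2.val 0),
      Or.inl ⟨rfl, 0, by omega, rfl⟩,
      (⟨i*t + a.1.val + 1, hlt2⟩, bcol h c t k a.2.val 0),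
      Or.inl ⟨by show i*t + a.1.val + 1 = i*t + b.1.val; omega, 0, by omega, by rw [hcc]⟩, ?_⟩
    exact vadjG _ _ hlt2
  · -- special edges: handles and cross-caps
    have h0tk : 0 < t*k := by omega
    refine ⟨((⟨0, h0tk⟩ : Fin (t*k)), tcol h c t k i a.2),
      Or.inr ⟨ha0, Nat.zero_le _, rfl⟩,
      ((⟨0, h0tk⟩ : Fin (t*k)), tcol h c t k i b.2),
      Or.inr ⟨hb0, Nat.zero_le _, rfl⟩, ?_⟩
    rcases hsp with ⟨pos, hp1, hp2, jj, hj1, hj2, (⟨ha2, hb2⟩ | ⟨ha2, hb2⟩)⟩ |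
      ⟨pos, hp1, hp2, jj, hj1, hj2, ha2, hb2⟩
    · -- handle, first family
      have hkj1 : k*1 ≤ k*jj := Nat.mul_le_mul_left k hj1
      have hkj2 : k*jj ≤ k*t := Nat.mul_le_mul_left k hj2
      have hkA : k * (4 * t * (pos - 1) + jj) = 4 * (t*k) * (pos-1) + k*jj := by ring
      have hkB : k * (4 * t * (pos - 1) + 3 * t - jj + 1)
          = 4 * (t*k) * (pos-1) + k*(3*t-jj) + k := by
        rw [show 4 * t * (pos - 1) + 3 * t - jj + 1 = 4 * t * (pos - 1) + (3*t - jj) + 1 from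
          by omega]
        ring
      have hsum : k*jj + k*(3*t - jj) = 3*(t*k) := by
        rw [← Nat.mul_add, show jj + (3*t - jj) = 3*t from by omega]
        ring
      have hoffa : off h c t k i ((4 * t * (pos - 1) + jj : ℕ)
          : ZMod (4 * t * (1 + h + c))) = i := by
        unfold off
        rw [if_neg]
        apply notC1 ht
        all_goals
          rw [show 4 * t * (pos - 1) + jj = jj + (pos-1)*(4*t) from by ring,
            Nat.add_mul_mod_self_right, Nat.mod_eq_of_lt (by omega)]
          omega
      have hoffb : off h c t k i ((4 * t * (pos - 1) + 3 * t - jj + 1 : ℕ)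
          : ZMod (4 * t * (1 + h + c))) = k-1-i := by
        unfold off
        rw [if_pos]
        rw [show 4 * t * (pos - 1) + 3 * t - jj + 1
          = 4 * t * (pos - 1) + (3 * t - jj + 1) from by omega]
        exact cnd_intro hp1 hp2 (by omega) (by omega)
      have hx2 : tcol h c t k i a.2
          = ((4 * (t*k) * (pos - 1) + (k*jj - i) : ℕ) : ZMod (4 * (t*k) * (1 + h + c))) := by
        unfold tcol
        have hiA : i ≤ k * (4 * t * (pos - 1) + jj) := by omega
        have hiN : i ≤ 4 * (t*k) * (1 + h + c) := by omega
        rw [ha2, hoffa, bcol_cast_sub ht hk hiA hiN]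
        congr 1
        omega
      have hy2 : tcol h c t k i b.2
          = ((4 * (t*k) * (pos - 1) + (3*(t*k) - (k*jj - i) + 1) : ℕ)
              : ZMod (4 * (t*k) * (1 + h + c))) := by
        unfold tcol
        have hsA : k - 1 - i ≤ k * (4 * t * (pos - 1) + 3 * t - jj + 1) := by omega
        have hsN : k - 1 - i ≤ 4 * (t*k) * (1 + h + c) := by omega
        rw [hb2, hoffb, bcol_cast_sub ht hk hsA hsN]
        congr 1
        omega
      rw [hx2, hy2]
      unfold dyckGrid
      rw [SimpleGraph.fromRel_adj]
      constructor
      · intro heq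
        have h2 := congrArg Prod.snd heq
        simp only at h2
        refine cast_ne ht hk ?_ ?_ h2 <;> omega
      · refine Or.inl (Or.inr ⟨rfl, rfl, Or.inl ⟨pos, hp1, hp2, k*jj - i, ?_, ?_,
          Or.inl ⟨rfl, ?_⟩⟩⟩)
        · omega
        · omega
        · dsimp only
          congr 1
          omega
    · -- handle, second family
      have hkj1 : k*1 ≤ k*jj := Nat.mul_le_mul_left k hj1
      have hkj2 : k*jj ≤ k*t := Nat.mul_le_mul_left k hj2
      have hkA : k * (4 * t * (pos - 1) + t + jj) = 4 * (t*k) * (pos-1) + t*k + k*jj := by ring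
      have hkB : k * (4 * t * (pos - 1) + 4 * t - jj + 1)
          = 4 * (t*k) * (pos-1) + k*(4*t-jj) + k := by
        rw [show 4 * t * (pos - 1) + 4 * t - jj + 1 = 4 * t * (pos - 1) + (4*t - jj) + 1 from
          by omega]
        ring
      have hsum : k*jj + k*(4*t - jj) = 4*(t*k) := by
        rw [← Nat.mul_add, show jj + (4*t - jj) = 4*t from by omega]
        ring
      have hoffa : off h c t k i ((4 * t * (pos - 1) + t + jj : ℕ)
          : ZMod (4 * t * (1 + h + c))) = i := by
        unfold off
        rw [if_neg]
        apply notC1 ht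
        all_goals
          rw [show 4 * t * (pos - 1) + t + jj = (t + jj) + (pos-1)*(4*t) from by ring,
            Nat.add_mul_mod_self_right, Nat.mod_eq_of_lt (by omega)]
          omega
      have hoffb : off h c t k i ((4 * t * (pos - 1) + 4 * t - jj + 1 : ℕ)
          : ZMod (4 * t * (1 + h + c))) = k-1-i := by
        unfold off
        rw [if_pos]
        rw [show 4 * t * (pos - 1) + 4 * t - jj + 1
          = 4 * t * (pos - 1) + (4 * t - jj + 1) from by omega]
        exact cnd_intro hp1 hp2 (by omega) (by omega)
      have hx2 : tcol h c t k i a.2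
          = ((4 * (t*k) * (pos - 1) + t*k + (k*jj - i) : ℕ)
              : ZMod (4 * (t*k) * (1 + h + c))) := by
        unfold tcol
        have hiA : i ≤ k * (4 * t * (pos - 1) + t + jj) := by omega
        have hiN : i ≤ 4 * (t*k) * (1 + h + c) := by omega
        rw [ha2, hoffa, bcol_cast_sub ht hk hiA hiN]
        congr 1
        omega
      have hy2 : tcol h c t k i b.2
          = ((4 * (t*k) * (pos - 1) + (4*(t*k) - (k*jj - i) + 1) : ℕ)
              : ZMod (4 * (t*k) * (1 + h + c))) := by
        unfold tcol
        have hsA : k - 1 - i ≤ k * (4 * t * (pos - 1) + 4 * t - jj + 1) := by omega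
        have hsN : k - 1 - i ≤ 4 * (t*k) * (1 + h + c) := by omega
        rw [hb2, hoffb, bcol_cast_sub ht hk hsA hsN]
        congr 1
        omega
      rw [hx2, hy2]
      unfold dyckGrid
      rw [SimpleGraph.fromRel_adj]
      constructor
      · intro heq
        have h2 := congrArg Prod.snd heq
        simp only at h2
        refine cast_ne ht hk ?_ ?_ h2 <;> omega
      · refine Or.inl (Or.inr ⟨rfl, rfl, Or.inl ⟨pos, hp1, hp2, k*jj - i, ?_, ?_,
          Or.inr ⟨rfl, ?_⟩⟩⟩)
        · omega
        · omega
        · dsimp only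
          congr 1
          omega
    · -- cross-cap
      have hkj1 : k*1 ≤ k*jj := Nat.mul_le_mul_left k hj1
      have hkj2 : k*jj ≤ k*(2*t) := Nat.mul_le_mul_left k hj2
      have hk2t : k*(2*t) = 2*(t*k) := by ring
      have hkA : k * (4 * t * (pos - 1) + jj) = 4 * (t*k) * (pos-1) + k*jj := by ring
      have hkB : k * (4 * t * (pos - 1) + 2 * t + jj)
          = 4 * (t*k) * (pos-1) + 2*(t*k) + k*jj := by ring
      have hoffa : off h c t k i ((4 * t * (pos - 1) + jj : ℕ)
          : ZMod (4 * t * (1 + h + c))) = i := by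
        unfold off
        rw [if_neg]
        apply notC1 ht
        all_goals
          rw [show 4 * t * (pos - 1) + jj = jj + (pos-1)*(4*t) from by ring,
            Nat.add_mul_mod_self_right, Nat.mod_eq_of_lt (by omega)]
          omega
      have hoffb : off h c t k i ((4 * t * (pos - 1) + 2 * t + jj : ℕ)
          : ZMod (4 * t * (1 + h + c))) = i := by
        unfold off
        rw [if_neg]
        apply notC2 ht
        · have hb1 : 4*t*(h+1) ≤ 4*t*(pos-1) := Nat.mul_le_mul_left _ (by omega)
          omega
        · have hb1 : 4*t*(pos-1) ≤ 4*t*(h+c) := Nat.mul_le_mul_left _ (by omega)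
          have hb2' : 4*t*(h+c) + 4*t = 4*t*(1+h+c) := by ring
          omega
      have hx2 : tcol h c t k i a.2
          = ((4 * (t*k) * (pos - 1) + (k*jj - i) : ℕ) : ZMod (4 * (t*k) * (1 + h + c))) := by
        unfold tcol
        have hiA : i ≤ k * (4 * t * (pos - 1) + jj) := by omega
        have hiN : i ≤ 4 * (t*k) * (1 + h + c) := by omega
        rw [ha2, hoffa, bcol_cast_sub ht hk hiA hiN]
        congr 1
        omega
      have hy2 : tcol h c t k i b.2
          = ((4 * (t*k) * (pos - 1) + 2*(t*k) + (k*jj - i) : ℕ)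
              : ZMod (4 * (t*k) * (1 + h + c))) := by
        unfold tcol
        have hsA : i ≤ k * (4 * t * (pos - 1) + 2 * t + jj) := by omega
        have hsN : i ≤ 4 * (t*k) * (1 + h + c) := by omega
        rw [hb2, hoffb, bcol_cast_sub ht hk hsA hsN]
        congr 1
        omega
      rw [hx2, hy2]
      unfold dyckGrid
      rw [SimpleGraph.fromRel_adj]
      constructor
      · intro heq
        have h2 := congrArg Prod.snd heq
        simp only at h2
        refine cast_ne ht hk ?_ ?_ h2 <;> omega
      · refine Or.inl (Or.inr ⟨rfl, rfl, Or.inr ⟨pos, hp1, hp2, k*jj - i, ?_, ?_,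
          rfl, rfl⟩⟩)
        · omega
        · omega

lemma Xcol (hk : 1 ≤ k) {i : ℕ} (hik : i < k) {r : Fin t} {j : ZMod (4 * t * (1 + h + c))}
    {p : Fin (t*k) × ZMod (4 * (t*k) * (1 + h + c))}
    (hp : p ∈ Xset h c t k i r j) : ∃ s, s < k ∧ p.2 = bcol h c t k j.val s := by
  rcases hp with ⟨_, s, hs, hcol⟩ | ⟨_, _, hcol⟩
  · exact ⟨s, hs, hcol⟩
  · exact ⟨off h c t k i j, off_lt hk hik j, hcol⟩

lemma Xdisj (ht : 1 ≤ t) (hk : 1 ≤ k) {i : ℕ} (hik : i < k)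
    {r₁ r₂ : Fin t} {j₁ j₂ : ZMod (4 * t * (1 + h + c))}
    (hne : (r₁, j₁) ≠ (r₂, j₂)) :
    Disjoint (Xset h c t k i r₁ j₁) (Xset h c t k i r₂ j₂) := by
  haveI : NeZero (4 * t * (1 + h + c)) := ⟨(nn_pos (h := h) (c := c) ht).ne'⟩
  rw [Set.disjoint_left]
  intro p h1 h2
  by_cases hj : j₁ = j₂
  · subst hj
    have hv : r₁.val ≠ r₂.val := by
      intro hh
      exact hne (by rw [Fin.ext hh])
    rcases h1 with ⟨hrow1, -⟩ | ⟨hz1, hrow1, -⟩ <;>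
      rcases h2 with ⟨hrow2, -⟩ | ⟨hz2, hrow2, -⟩ <;> omega
  · obtain ⟨s₁, hs₁, hc₁⟩ := Xcol hk hik h1
    obtain ⟨s₂, hs₂, hc₂⟩ := Xcol hk hik h2
    have hbb := bcol_inj ht hk (ZMod.val_lt j₁) (ZMod.val_lt j₂) hs₁ hs₂
      (hc₁.symm.trans hc₂)
    exact hj (ZMod.val_injective _ hbb.1)

lemma Xnonempty (ht : 1 ≤ t) (hk : 1 ≤ k) {i : ℕ} (hik : i < k)
    (r : Fin t) (j : ZMod (4 * t * (1 + h + c))) :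
    ((⟨i*t + r.val, row_lt ht hik r.isLt⟩ : Fin (t*k)), bcol h c t k j.val 0)
      ∈ Xset h c t k i r j :=
  Or.inl ⟨rfl, 0, hk, rfl⟩

lemma Smult (ht : 1 ≤ t) (hk : 1 ≤ k) (w : Fin (t*k) × ZMod (4 * (t*k) * (1 + h + c))) :
    {i : Fin k | w ∈ Sset h c t k i.val}.ncard ≤ 2 := by
  classical
  obtain ⟨row, col⟩ := w
  have hrow := row.isLt
  have hktc : k*t = t*k := Nat.mul_comm k t
  have hd : row.val / t < k := by
    rw [Nat.div_lt_iff_lt_mul (by omega : 0 < t)]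
    omega
  set i₀ : Fin k := ⟨row.val / t, hd⟩ with hi₀
  have hdiv : ∀ i : Fin k, i.val * t ≤ row.val → row.val < i.val * t + t → i = i₀ := by
    intro i hlo hhi
    apply Fin.ext
    show i.val = row.val / t
    symm
    apply Nat.div_eq_of_lt_le
    · exact hlo
    · rw [Nat.succ_mul]; omega
  by_cases hT : ∃ i' : Fin k, ∃ a, col = tcol h c t k i'.val a
  · obtain ⟨i₁, a₁, ha₁⟩ := hT
    have hsub : {i : Fin k | (row, col) ∈ Sset h c t k i.val} ⊆ {i₀, i₁} := by
      intro i hi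
      rcases hi with ⟨hlo, hhi⟩ | ⟨-, a, ha⟩
      · exact Or.inl (hdiv i hlo hhi)
      · refine Or.inr ?_
        have := tcol_inj ht hk i.isLt i₁.isLt (ha.symm.trans ha₁)
        exact Fin.ext this.1
    calc {i : Fin k | (row, col) ∈ Sset h c t k i.val}.ncard
        ≤ ({i₀, i₁} : Set (Fin k)).ncard := Set.ncard_le_ncard hsub (Set.toFinite _)
      _ ≤ ({i₁} : Set (Fin k)).ncard + 1 := Set.ncard_insert_le _ _
      _ ≤ 2 := by rw [Set.ncard_singleton]
  · have hsub : {i : Fin k | (row, col) ∈ Sset h c t k i.val} ⊆ {i₀} := by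
      intro i hi
      rcases hi with ⟨hlo, hhi⟩ | ⟨-, a, ha⟩
      · exact hdiv i hlo hhi
      · exact absurd ⟨i, a, ha⟩ hT
    calc {i : Fin k | (row, col) ∈ Sset h c t k i.val}.ncard
        ≤ ({i₀} : Set (Fin k)).ncard := Set.ncard_le_ncard hsub (Set.toFinite _)
      _ ≤ 2 := by rw [Set.ncard_singleton]; omega

end Facts
end Aux4
/-- Proposition 2.3. For every `h ∈ ℕ`, every `c ∈ {0,1,2}`, and all integers
`t, k ≥ 1`, the Dyck grid `D^{(h,c)}_{tk}` contains a half-integral packing of size `k` of copies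
of `D^{(h,c)}_t`. -/
theorem stmt_4 (h c : ℕ) (hc : c ≤ 2) (t k : ℕ) (ht : 1 ≤ t) (hk : 1 ≤ k) :
    HasHalfPacking (dyckGrid h c t) (dyckGrid h c (t * k)) k := by
  classical
  refine ⟨fun i => Aux4.Msub h c t k i.val, ?_, ?_⟩
  · intro w
    exact Aux4.Smult ht hk w
  · intro i
    refine ⟨fun a => {x : ↥((Aux4.Msub h c t k i.val).verts) |
      x.1 ∈ Aux4.Xset h c t k i.val a.1 a.2}, ?_, ?_, ?_, ?_⟩
    · intro a
      exact ⟨⟨_, Aux4.Xsub_S a.1 a.2 (Aux4.Xnonempty ht hk i.isLt a.1 a.2)⟩,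
        Aux4.Xnonempty ht hk i.isLt a.1 a.2⟩
    · intro a b hab
      have hne : (a.1, a.2) ≠ (b.1, b.2) := by
        intro hh
        apply hab
        obtain ⟨h1, h2⟩ := Prod.mk.injEq _ _ _ _ ▸ hh
        exact Prod.ext h1 h2
      have hd := Aux4.Xdisj ht hk (i := i.val) i.isLt hne
      rw [Set.disjoint_left] at hd ⊢
      intro x hx1 hx2
      exact hd hx1 hx2
    · intro a
      exact Aux4.conn_X ht hk i.isLt a.1 a.2
    · intro a b hadj
      unfold dyckGrid at hadj
      rw [SimpleGraph.fromRel_adj] at hadj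
      obtain ⟨hne, hrel | hrel⟩ := hadj
      · obtain ⟨x, hx, y, hy, hxy⟩ := Aux4.realize ht hk i.isLt a b hrel
        exact ⟨⟨x, Aux4.Xsub_S a.1 a.2 hx⟩, hx, ⟨y, Aux4.Xsub_S b.1 b.2 hy⟩, hy,
          Aux4.msub_coe_adj _ _ hxy⟩
      · obtain ⟨y, hy, x, hx, hyx⟩ := Aux4.realize ht hk i.isLt b a hrel
        exact ⟨⟨x, Aux4.Xsub_S a.1 a.2 hx⟩, hx, ⟨y, Aux4.Xsub_S b.1 b.2 hy⟩, hy,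
          (Aux4.msub_coe_adj _ _ hyx).symm⟩
end

section
/- Let H be a connected graph with at least one vertex, let G be a graph, and let (X, Y) be a separation of G such that (X, X ∩ Y) is an H-local cover of G and the induced subgraph G[Y ∖ X] has no H-minor. Then X ∩ Y is an H-cover of G, i.e., G − (X ∩ Y) has no H-minor. (Observation 5.10 of the paper, stated for connected H, for which npl(H) = H when H is non-planar.) -/
open SimpleGraph

/-- The graph obtained from `M` by dissolving (suppressing) all vertices outside `T`:
two vertices of `T` are adjacent iff they are joined in `M` by a walk of positive length all
of whose internal vertices lie outside `T`. -/
def dissolve {W : Type*} (M : SimpleGraph W) (T : Set W) : SimpleGraph T :=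
  SimpleGraph.fromRel fun a b =>
    ∃ p : M.Walk (a : W) (b : W),
      ∀ v ∈ p.support, v ≠ (a : W) → v ≠ (b : W) → v ∉ T

/-- `(M, T)` is an `H`-expansion (here `M` is a subgraph of an ambient graph `G`):
`T ⊆ V(M)`, every vertex of `V(M) ∖ T` has degree `2` in `M`, and the graph obtained from `M`
by dissolving all vertices not in `T` contains `H` as a minor. -/
def IsExpansion {V : Type*} {W : Type*} (H : SimpleGraph V) {G : SimpleGraph W}
    (M : G.Subgraph) (T : Set W) : Prop :=
  T ⊆ M.verts ∧
  (∀ v ∈ M.verts, v ∉ T → (M.neighborSet v).ncard = 2) ∧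
  IsMinorOf H (dissolve M.coe {v : M.verts | (v : W) ∈ T})

/-- `M` is an `H`-inflated copy in `G`: `(M, T)` is a minimal `H`-expansion for some `T`. -/
def IsInflatedCopy {V : Type*} {W : Type*} (H : SimpleGraph V) {G : SimpleGraph W}
    (M : G.Subgraph) : Prop :=
  ∃ T : Set W, IsExpansion H M T ∧
    ∀ M' : G.Subgraph, M' ≤ M → IsExpansion H M' T → M' = M

/-- `(X, A)` is an `H`-local cover of `G`: `A ⊆ X ⊆ V(G)` and every `H`-inflated copy `M` in `G`
meeting `X` also meets `A`. -/
def IsLocalCover {V : Type*} {W : Type*} (H : SimpleGraph V) (G : SimpleGraph W)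
    (X A : Set W) : Prop :=
  A ⊆ X ∧
  ∀ M : G.Subgraph, IsInflatedCopy H M →
    (M.verts ∩ X).Nonempty → (M.verts ∩ A).Nonempty

lemma pred_of_reachable {α : Type*} {K : SimpleGraph α} {P : α → Prop}
    (hP : ∀ a b, K.Adj a b → P a → P b) {a b : α} (h : K.Reachable a b) (ha : P a) : P b := by
  obtain ⟨w⟩ := h
  induction w with
  | nil => exact ha
  | cons h p ih => exact ih (hP _ _ h ha)

lemma IsMinorOf.map {V α β : Type*} {H : SimpleGraph V} {G : SimpleGraph α} {G' : SimpleGraph β}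
    (f : α → β) (hinj : Function.Injective f)
    (hadj : ∀ u v, G.Adj u v → G'.Adj (f u) (f v)) (h : IsMinorOf H G) : IsMinorOf H G' := by
  obtain ⟨Xs, hne, hdisj, hcn, hedge⟩ := h
  refine ⟨fun a => f '' Xs a, fun a => (hne a).image f,
    fun a b hab => Set.disjoint_image_of_injective hinj (hdisj a b hab), ?_, ?_⟩
  · intro a
    refine Connected.map (G := G.induce (Xs a))
      ⟨fun v => ⟨f v.1, ⟨v.1, v.2, rfl⟩⟩, fun {u v} h => hadj _ _ h⟩ ?_ (hcn a)
    rintro ⟨_, ⟨v, hv, rfl⟩⟩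
    exact ⟨⟨v, hv⟩, rfl⟩
  · intro a b hab
    obtain ⟨x, hx, y, hy, hxy⟩ := hedge a b hab
    exact ⟨f x, ⟨x, hx, rfl⟩, f y, ⟨y, hy, rfl⟩, hadj _ _ hxy⟩

lemma minor_restrict {V α β : Type*} {H : SimpleGraph V} {G : SimpleGraph α} {G' : SimpleGraph β}
    (f : β → α) (hinj : Function.Injective f)
    (hadj : ∀ u v, G.Adj (f u) (f v) → G'.Adj u v)
    (Xs : V → Set α) (hne : ∀ a, (Xs a).Nonempty)
    (hdisj : ∀ a b, a ≠ b → Disjoint (Xs a) (Xs b))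
    (hcn : ∀ a, (G.induce (Xs a)).Connected)
    (hedge : ∀ a b, H.Adj a b → ∃ x ∈ Xs a, ∃ y ∈ Xs b, G.Adj x y)
    (hrange : ∀ a, Xs a ⊆ Set.range f) : IsMinorOf H G' := by
  refine ⟨fun a => f ⁻¹' Xs a, ?_, fun a b hab => Disjoint.preimage f (hdisj a b hab), ?_, ?_⟩
  · intro a
    obtain ⟨x, hx⟩ := hne a
    obtain ⟨y, rfl⟩ := hrange a hx
    exact ⟨y, hx⟩
  · intro a
    refine Connected.map (G := G.induce (Xs a))
      ⟨fun v => ⟨(hrange a v.2).choose,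
        by have h := (hrange a v.2).choose_spec
           simp only [Set.mem_preimage, h]; exact v.2⟩,
       fun {u v} h => hadj _ _
        (show G.Adj (f (hrange a u.2).choose) (f (hrange a v.2).choose) by
          rw [(hrange a u.2).choose_spec, (hrange a v.2).choose_spec]; exact h)⟩
      ?_ (hcn a)
    rintro ⟨y, hy⟩
    refine ⟨⟨f y, hy⟩, Subtype.ext (hinj ?_)⟩
    exact (hrange a hy).choose_spec
  · intro a b hab
    obtain ⟨x, hx, y, hy, hxy⟩ := hedge a b hab
    obtain ⟨x', rfl⟩ := hrange a hx
    obtain ⟨y', rfl⟩ := hrange b hy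
    exact ⟨x', hx, y', hy, hadj _ _ hxy⟩

/-- Observation 5.10, for connected `H`. Let `H` be a connected graph with at
least one vertex, `G` a graph, and `(X, Y)` a separation of `G` such that `(X, X ∩ Y)` is an
`H`-local cover of `G` and `G[Y ∖ X]` has no `H`-minor.  Then `X ∩ Y` is an `H`-cover of `G`. -/
theorem stmt_5 {V : Type*} {W : Type*} [Fintype V] [Fintype W]
    (H : SimpleGraph V) (hconn : H.Connected) (G : SimpleGraph W)
    (X Y : Set W) (hunion : X ∪ Y = Set.univ)
    (hsep : ∀ a ∈ X \ Y, ∀ b ∈ Y \ X, ¬ G.Adj a b)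
    (hloc : IsLocalCover H G X (X ∩ Y))
    (hY : ¬ IsMinorOf H (G.induce (Y \ X))) :
    ¬ IsMinorOf H (G.induce (X ∩ Y)ᶜ) := by
  classical
  set S : Set W := (X ∩ Y)ᶜ with hS
  rintro ⟨Xs, hne, hdisj, hcn, hedge⟩
  -- every vertex of S is on exactly one side
  have hside : ∀ v : S, (v : W) ∈ X \ Y ∨ (v : W) ∈ Y \ X := by
    intro v
    have hv : (v : W) ∉ X ∩ Y := v.2
    have hv2 : (v : W) ∈ X ∪ Y := hunion ▸ Set.mem_univ _
    rcases hv2 with h | h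
    · exact Or.inl ⟨h, fun hy => hv ⟨h, hy⟩⟩
    · exact Or.inr ⟨h, fun hx => hv ⟨hx, h⟩⟩
  have hGadj : ∀ u v : S, (G.induce S).Adj u v → G.Adj (u : W) (v : W) := by
    intro u v h; simpa using h
  -- adjacency preserves sides
  have hpresL : ∀ u v : S, (G.induce S).Adj u v → (u : W) ∈ X \ Y → (v : W) ∈ X \ Y := by
    intro u v h hu
    rcases hside v with h2 | h2
    · exact h2
    · exact absurd (hGadj u v h) (hsep _ hu _ h2)
  have hpresR : ∀ u v : S, (G.induce S).Adj u v → (u : W) ∈ Y \ X → (v : W) ∈ Y \ X := by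
    intro u v h hu
    rcases hside v with h2 | h2
    · exact absurd (hGadj u v h).symm (hsep _ h2 _ hu)
    · exact h2
  -- each branch set lies on one side
  have hbs : ∀ a, (∀ v ∈ Xs a, (v : W) ∈ X \ Y) ∨ (∀ v ∈ Xs a, (v : W) ∈ Y \ X) := by
    intro a
    obtain ⟨v0, hv0⟩ := hne a
    have hreach : ∀ v (hv : v ∈ Xs a),
        ((G.induce S).induce (Xs a)).Reachable ⟨v0, hv0⟩ ⟨v, hv⟩ :=
      fun v hv => (hcn a).preconnected _ _
    rcases hside v0 with h | h
    · left
      intro v hv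
      refine pred_of_reachable (P := fun u : Xs a => ((u : S) : W) ∈ X \ Y)
        ?_ (hreach v hv) h
      intro p q hpq hp
      exact hpresL _ _ (by simpa using hpq) hp
    · right
      intro v hv
      refine pred_of_reachable (P := fun u : Xs a => ((u : S) : W) ∈ Y \ X)
        ?_ (hreach v hv) h
      intro p q hpq hp
      exact hpresR _ _ (by simpa using hpq) hp
  -- all branch sets lie on the same side
  have hall : (∀ a, ∀ v ∈ Xs a, (v : W) ∈ X \ Y) ∨ (∀ a, ∀ v ∈ Xs a, (v : W) ∈ Y \ X) := by
    obtain ⟨a0⟩ := hconn.nonempty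
    have hHL : ∀ a b, H.Adj a b → (∀ v ∈ Xs a, (v : W) ∈ X \ Y) →
        (∀ v ∈ Xs b, (v : W) ∈ X \ Y) := by
      intro a b hab hA
      rcases hbs b with h | h
      · exact h
      · exfalso
        obtain ⟨x, hx, y, hy, hxy⟩ := hedge a b hab
        exact hsep _ (hA x hx) _ (h y hy) (hGadj x y hxy)
    have hHR : ∀ a b, H.Adj a b → (∀ v ∈ Xs a, (v : W) ∈ Y \ X) →
        (∀ v ∈ Xs b, (v : W) ∈ Y \ X) := by
      intro a b hab hA
      rcases hbs b with h | h
      · exfalso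
        obtain ⟨x, hx, y, hy, hxy⟩ := hedge a b hab
        exact hsep _ (h y hy) _ (hA x hx) (hGadj x y hxy).symm
      · exact h
    rcases hbs a0 with h | h
    · exact Or.inl fun a => pred_of_reachable hHL (hconn.preconnected a0 a) h
    · exact Or.inr fun a => pred_of_reachable hHR (hconn.preconnected a0 a) h
  rcases hall with hall | hall
  · -- all branch sets in X \ Y : build an inflated copy avoiding X ∩ Y
    set Uw : Set W := {w : W | ∃ a, ∃ v ∈ Xs a, (v : W) = w} with hUw
    have hUX : Uw ⊆ X \ Y := by
      rintro w ⟨a, v, hv, rfl⟩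
      exact hall a v hv
    have hUS : Uw ⊆ S := by
      rintro w ⟨a, v, hv, rfl⟩
      exact v.2
    -- the subgraph induced on Uw
    set M0 : G.Subgraph :=
      { verts := Uw
        Adj := fun a b => a ∈ Uw ∧ b ∈ Uw ∧ G.Adj a b
        adj_sub := fun h => h.2.2
        edge_vert := fun h => h.1
        symm := ⟨fun a b h => ⟨h.2.1, h.1, h.2.2.symm⟩⟩ } with hM0
    -- H is a minor of G.induce Uw
    have hminU : IsMinorOf H (G.induce Uw) := by
      refine minor_restrict (G := G.induce S) (fun v : Uw => (⟨(v : W), hUS v.2⟩ : S))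
        ?_ ?_ Xs hne hdisj hcn hedge ?_
      · intro u v h
        simp only [Subtype.mk.injEq] at h
        exact Subtype.ext h
      · intro u v h
        simp only [comap_adj] at h ⊢
        exact h
      · intro a v hv
        exact ⟨⟨(v : W), ⟨a, v, hv, rfl⟩⟩, rfl⟩
    -- H is a minor of the dissolved M0
    have hmdis : IsMinorOf H (dissolve M0.coe {v : M0.verts | (v : W) ∈ Uw}) := by
      refine IsMinorOf.map (fun v : Uw => (⟨⟨(v : W), v.2⟩, v.2⟩ :
        {v : M0.verts | (v : W) ∈ Uw})) ?_ ?_ hminU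
      · intro u v h
        simp only [Subtype.mk.injEq] at h
        exact Subtype.ext h
      · intro u v h
        have hG : G.Adj (u : W) (v : W) := by simpa using h
        have hM : M0.coe.Adj ⟨(u : W), u.2⟩ ⟨(v : W), v.2⟩ := by
          simp only [Subgraph.coe_adj]
          exact ⟨u.2, v.2, hG⟩
        rw [dissolve, fromRel_adj]
        refine ⟨?_, Or.inl ⟨Walk.cons hM Walk.nil, ?_⟩⟩
        · intro hcontra
          simp only [Subtype.mk.injEq] at hcontra
          exact hG.ne hcontra
        · intro w hw hw1 hw2
          simp only [Walk.support_cons, Walk.support_nil, List.mem_cons,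
            List.mem_singleton] at hw
          rcases hw with rfl | rfl | h
          · exact absurd rfl hw1
          · exact absurd rfl hw2
          · exact absurd h List.not_mem_nil
    -- M0 is an expansion; find a minimal one
    have hM0exp : IsExpansion H M0 Uw := by
      refine ⟨subset_rfl, ?_, hmdis⟩
      intro v hv hv'
      exact absurd hv hv'
    set 𝒮 : Set G.Subgraph := {M' | M' ≤ M0 ∧ IsExpansion H M' Uw} with h𝒮
    have h𝒮ne : ((fun M' : G.Subgraph => M'.edgeSet.ncard) '' 𝒮).Nonempty :=
      ⟨M0.edgeSet.ncard, M0, ⟨le_refl _, hM0exp⟩, rfl⟩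
    obtain ⟨n, ⟨M1, hM1, rfl⟩, hminimal⟩ :=
      (wellFounded_lt (α := ℕ)).has_min _ h𝒮ne
    have hM1verts : M1.verts = Uw :=
      Set.Subset.antisymm (Subgraph.verts_mono hM1.1) hM1.2.1
    have hM1copy : IsInflatedCopy H M1 := by
      refine ⟨Uw, hM1.2, ?_⟩
      intro M2 hle hexp2
      have hM2 : M2 ∈ 𝒮 := ⟨le_trans hle hM1.1, hexp2⟩
      have hE : M2.edgeSet ⊆ M1.edgeSet := Subgraph.edgeSet_mono hle
      have hle' : M1.edgeSet.ncard ≤ M2.edgeSet.ncard := by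
        by_contra hcon
        exact hminimal _ ⟨M2, hM2, rfl⟩ (lt_of_not_ge hcon)
      have hEeq : M2.edgeSet = M1.edgeSet :=
        Set.eq_of_subset_of_ncard_le hE hle' (Set.toFinite _)
      refine Subgraph.ext ?_ ?_
      · exact Set.Subset.antisymm (Subgraph.verts_mono hle) (hM1verts ▸ hexp2.1)
      · funext a b
        exact propext ⟨fun h => hle.2 h,
          fun h => Subgraph.mem_edgeSet.mp (hEeq ▸ Subgraph.mem_edgeSet.mpr h)⟩
    -- contradiction with the local cover
    obtain ⟨a0⟩ := hconn.nonempty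
    obtain ⟨v0, hv0⟩ := hne a0
    have hw0 : (v0 : W) ∈ Uw := ⟨a0, v0, hv0, rfl⟩
    obtain ⟨w, hwM, hwXY⟩ := hloc.2 M1 hM1copy
      ⟨(v0 : W), hM1verts ▸ hw0, (hUX hw0).1⟩
    have : w ∈ Uw := hM1verts ▸ hwM
    exact (hUX this).2 hwXY.2
  · -- all branch sets in Y \ X : contradiction with hY
    refine hY (minor_restrict (G := G.induce S)
      (fun v : (Y \ X : Set W) => (⟨(v : W), fun hc => v.2.2 hc.1⟩ : S)) ?_ ?_
      Xs hne hdisj hcn hedge ?_)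
    · intro u v h
      simp only [Subtype.mk.injEq] at h
      exact Subtype.ext h
    · intro u v h
      simp only [comap_adj] at h ⊢
      exact h
    · intro a v hv
      exact ⟨⟨(v : W), hall a v hv⟩, rfl⟩
end

section
/- For every r ∈ ℕ there exists k ∈ ℕ such that the complete bipartite graph K_{3,r} is a minor of the shallow-vortex grid V_k; that is, K_{3,r} is a shallow-vortex minor for every r. (Claim stated in Section 1.1 of the paper.) -/
open SimpleGraph

/-- The shallow-vortex grid `V_k`: the `(k, 4k)`-cylindrical grid together with, for each
`i < k`, the two crossing edges `v^1_{4i+1} v^1_{4i+3}` and `v^1_{4i+2} v^1_{4i+4}` on the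
first cycle. -/
def shallowVortexGrid (k : ℕ) : SimpleGraph (Fin k × ZMod (4 * k)) :=
  SimpleGraph.fromRel fun p q =>
    cylRel k (4 * k) p q ∨
    ((p.1 : ℕ) = 0 ∧ (q.1 : ℕ) = 0 ∧ ∃ i < k,
      ((p.2 = ((4 * i + 1 : ℕ) : ZMod (4 * k)) ∧ q.2 = ((4 * i + 3 : ℕ) : ZMod (4 * k))) ∨
       (p.2 = ((4 * i + 2 : ℕ) : ZMod (4 * k)) ∧ q.2 = ((4 * i + 4 : ℕ) : ZMod (4 * k)))))

namespace Stmt7Aux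

/-- Vertex `(row, col)` in the shallow-vortex grid `V_{2r+4}`. -/
def vx (r : ℕ) (i : ℕ) (h : i < 2 * r + 4) (c : ℕ) :
    Fin (2 * r + 4) × ZMod (4 * (2 * r + 4)) :=
  (⟨i, h⟩, (c : ZMod (4 * (2 * r + 4))))

@[simp] lemma vx_fst (r i : ℕ) (h) (c : ℕ) : ((vx r i h c).1 : ℕ) = i := rfl

@[simp] lemma vx_snd (r i : ℕ) (h) (c : ℕ) :
    (vx r i h c).2 = (c : ZMod (4 * (2 * r + 4))) := rfl

lemma ne_of_mod8 {r : ℕ} {a b : ℕ} (h : a % 8 ≠ b % 8) :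
    (a : ZMod (4 * (2 * r + 4))) ≠ (b : ZMod (4 * (2 * r + 4))) := by
  intro he
  rw [ZMod.natCast_eq_natCast_iff] at he
  have h8 : (8 : ℕ) ∣ 4 * (2 * r + 4) := ⟨r + 2, by ring⟩
  exact h (he.of_dvd h8)

lemma adjH {r : ℕ} (i : ℕ) (hi : i < 2 * r + 4) (c c' : ℕ) (h : c' = c + 1) :
    (shallowVortexGrid (2 * r + 4)).Adj (vx r i hi c) (vx r i hi c') := by
  subst h
  rw [shallowVortexGrid, SimpleGraph.fromRel_adj]
  refine ⟨fun he => ne_of_mod8 (by omega) (congrArg Prod.snd he),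
    Or.inl (Or.inl (Or.inl ⟨rfl, ?_⟩))⟩
  show ((c + 1 : ℕ) : ZMod (4 * (2 * r + 4))) = (c : ZMod (4 * (2 * r + 4))) + 1
  push_cast
  ring

lemma adjV {r : ℕ} (a : ℕ) (h : a + 1 < 2 * r + 4) (c : ℕ) :
    (shallowVortexGrid (2 * r + 4)).Adj (vx r a (by omega) c) (vx r (a + 1) h c) := by
  rw [shallowVortexGrid, SimpleGraph.fromRel_adj]
  refine ⟨fun he => ?_, Or.inl (Or.inl (Or.inr ⟨rfl, rfl⟩))⟩
  have h2 := congrArg (fun x => (x.1 : ℕ)) he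
  simp [vx] at h2

lemma chord_cast {r : ℕ} (u b : ℕ) :
    ((4 * u + b : ℕ) : ZMod (4 * (2 * r + 4))) =
      ((4 * (u % (2 * r + 4)) + b : ℕ) : ZMod (4 * (2 * r + 4))) := by
  rw [ZMod.natCast_eq_natCast_iff]
  exact (((Nat.mod_modEq u (2 * r + 4)).mul_left' 4).add_right b).symm

lemma adjAC {r : ℕ} (u c c' : ℕ) (hc : c = 4 * u + 1) (hc' : c' = 4 * u + 3) :
    (shallowVortexGrid (2 * r + 4)).Adj (vx r 0 (by omega) c) (vx r 0 (by omega) c') := by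
  subst hc hc'
  rw [shallowVortexGrid, SimpleGraph.fromRel_adj]
  refine ⟨fun he => ne_of_mod8 (by omega) (congrArg Prod.snd he),
    Or.inl (Or.inr ⟨rfl, rfl, u % (2 * r + 4), Nat.mod_lt _ (by omega), Or.inl ⟨?_, ?_⟩⟩)⟩
  · exact chord_cast u 1
  · exact chord_cast u 3

lemma adjBD {r : ℕ} (u c c' : ℕ) (hc : c = 4 * u + 2) (hc' : c' = 4 * u + 4) :
    (shallowVortexGrid (2 * r + 4)).Adj (vx r 0 (by omega) c) (vx r 0 (by omega) c') := by
  subst hc hc'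
  rw [shallowVortexGrid, SimpleGraph.fromRel_adj]
  refine ⟨fun he => ne_of_mod8 (by omega) (congrArg Prod.snd he),
    Or.inl (Or.inr ⟨rfl, rfl, u % (2 * r + 4), Nat.mod_lt _ (by omega), Or.inr ⟨?_, ?_⟩⟩)⟩
  · exact chord_cast u 2
  · exact chord_cast u 4

/-- The branch set of the first big vertex: row `3`. -/
def fA (r m : ℕ) : Fin (2 * r + 4) × ZMod (4 * (2 * r + 4)) := vx r 3 (by omega) m

/-- The branch set of the second big vertex: a weaving closed track through rows 0,1,2. -/
def fB (r m : ℕ) : Fin (2 * r + 4) × ZMod (4 * (2 * r + 4)) :=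
  match m % 10 with
  | 0 => vx r 2 (by omega) (8 * (m / 10) + 0)
  | 1 => vx r 2 (by omega) (8 * (m / 10) + 1)
  | 2 => vx r 2 (by omega) (8 * (m / 10) + 2)
  | 3 => vx r 1 (by omega) (8 * (m / 10) + 2)
  | 4 => vx r 0 (by omega) (8 * (m / 10) + 2)
  | 5 => vx r 0 (by omega) (8 * (m / 10) + 4)
  | 6 => vx r 0 (by omega) (8 * (m / 10) + 5)
  | 7 => vx r 0 (by omega) (8 * (m / 10) + 7)
  | 8 => vx r 1 (by omega) (8 * (m / 10) + 7)
  | _ => vx r 2 (by omega) (8 * (m / 10) + 7)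

/-- The branch set of the third big vertex: a weaving closed track through rows 0,1. -/
def fC (r m : ℕ) : Fin (2 * r + 4) × ZMod (4 * (2 * r + 4)) :=
  match m % 10 with
  | 0 => vx r 1 (by omega) (8 * (m / 10) + 0)
  | 1 => vx r 1 (by omega) (8 * (m / 10) + 1)
  | 2 => vx r 0 (by omega) (8 * (m / 10) + 1)
  | 3 => vx r 0 (by omega) (8 * (m / 10) + 3)
  | 4 => vx r 1 (by omega) (8 * (m / 10) + 3)
  | 5 => vx r 1 (by omega) (8 * (m / 10) + 4)
  | 6 => vx r 1 (by omega) (8 * (m / 10) + 5)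
  | 7 => vx r 1 (by omega) (8 * (m / 10) + 6)
  | 8 => vx r 0 (by omega) (8 * (m / 10) + 6)
  | _ => vx r 0 (by omega) (8 * (m / 10) + 8)

/-- The branch set of the `t`-th small vertex. -/
def pt (r t : ℕ) : Fin (2 * r + 4) × ZMod (4 * (2 * r + 4)) := vx r 2 (by omega) (8 * t + 3)

lemma fB_eq0 (r q : ℕ) : fB r (10 * q + 0) = vx r 2 (by omega) (8 * q + 0) := by
  simp only [fB, show (10 * q + 0) % 10 = 0 from by omega,
    show (10 * q + 0) / 10 = q from by omega]
lemma fB_eq1 (r q : ℕ) : fB r (10 * q + 1) = vx r 2 (by omega) (8 * q + 1) := by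
  simp only [fB, show (10 * q + 1) % 10 = 1 from by omega,
    show (10 * q + 1) / 10 = q from by omega]
lemma fB_eq2 (r q : ℕ) : fB r (10 * q + 2) = vx r 2 (by omega) (8 * q + 2) := by
  simp only [fB, show (10 * q + 2) % 10 = 2 from by omega,
    show (10 * q + 2) / 10 = q from by omega]
lemma fB_eq3 (r q : ℕ) : fB r (10 * q + 3) = vx r 1 (by omega) (8 * q + 2) := by
  simp only [fB, show (10 * q + 3) % 10 = 3 from by omega,
    show (10 * q + 3) / 10 = q from by omega]
lemma fB_eq4 (r q : ℕ) : fB r (10 * q + 4) = vx r 0 (by omega) (8 * q + 2) := by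
  simp only [fB, show (10 * q + 4) % 10 = 4 from by omega,
    show (10 * q + 4) / 10 = q from by omega]
lemma fB_eq5 (r q : ℕ) : fB r (10 * q + 5) = vx r 0 (by omega) (8 * q + 4) := by
  simp only [fB, show (10 * q + 5) % 10 = 5 from by omega,
    show (10 * q + 5) / 10 = q from by omega]
lemma fB_eq6 (r q : ℕ) : fB r (10 * q + 6) = vx r 0 (by omega) (8 * q + 5) := by
  simp only [fB, show (10 * q + 6) % 10 = 6 from by omega,
    show (10 * q + 6) / 10 = q from by omega]
lemma fB_eq7 (r q : ℕ) : fB r (10 * q + 7) = vx r 0 (by omega) (8 * q + 7) := by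
  simp only [fB, show (10 * q + 7) % 10 = 7 from by omega,
    show (10 * q + 7) / 10 = q from by omega]
lemma fB_eq8 (r q : ℕ) : fB r (10 * q + 8) = vx r 1 (by omega) (8 * q + 7) := by
  simp only [fB, show (10 * q + 8) % 10 = 8 from by omega,
    show (10 * q + 8) / 10 = q from by omega]
lemma fB_eq9 (r q : ℕ) : fB r (10 * q + 9) = vx r 2 (by omega) (8 * q + 7) := by
  simp only [fB, show (10 * q + 9) % 10 = 9 from by omega,
    show (10 * q + 9) / 10 = q from by omega]

lemma fC_eq0 (r q : ℕ) : fC r (10 * q + 0) = vx r 1 (by omega) (8 * q + 0) := by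
  simp only [fC, show (10 * q + 0) % 10 = 0 from by omega,
    show (10 * q + 0) / 10 = q from by omega]
lemma fC_eq1 (r q : ℕ) : fC r (10 * q + 1) = vx r 1 (by omega) (8 * q + 1) := by
  simp only [fC, show (10 * q + 1) % 10 = 1 from by omega,
    show (10 * q + 1) / 10 = q from by omega]
lemma fC_eq2 (r q : ℕ) : fC r (10 * q + 2) = vx r 0 (by omega) (8 * q + 1) := by
  simp only [fC, show (10 * q + 2) % 10 = 2 from by omega,
    show (10 * q + 2) / 10 = q from by omega]
lemma fC_eq3 (r q : ℕ) : fC r (10 * q + 3) = vx r 0 (by omega) (8 * q + 3) := by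
  simp only [fC, show (10 * q + 3) % 10 = 3 from by omega,
    show (10 * q + 3) / 10 = q from by omega]
lemma fC_eq4 (r q : ℕ) : fC r (10 * q + 4) = vx r 1 (by omega) (8 * q + 3) := by
  simp only [fC, show (10 * q + 4) % 10 = 4 from by omega,
    show (10 * q + 4) / 10 = q from by omega]
lemma fC_eq5 (r q : ℕ) : fC r (10 * q + 5) = vx r 1 (by omega) (8 * q + 4) := by
  simp only [fC, show (10 * q + 5) % 10 = 5 from by omega,
    show (10 * q + 5) / 10 = q from by omega]
lemma fC_eq6 (r q : ℕ) : fC r (10 * q + 6) = vx r 1 (by omega) (8 * q + 5) := by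
  simp only [fC, show (10 * q + 6) % 10 = 6 from by omega,
    show (10 * q + 6) / 10 = q from by omega]
lemma fC_eq7 (r q : ℕ) : fC r (10 * q + 7) = vx r 1 (by omega) (8 * q + 6) := by
  simp only [fC, show (10 * q + 7) % 10 = 7 from by omega,
    show (10 * q + 7) / 10 = q from by omega]
lemma fC_eq8 (r q : ℕ) : fC r (10 * q + 8) = vx r 0 (by omega) (8 * q + 6) := by
  simp only [fC, show (10 * q + 8) % 10 = 8 from by omega,
    show (10 * q + 8) / 10 = q from by omega]
lemma fC_eq9 (r q : ℕ) : fC r (10 * q + 9) = vx r 0 (by omega) (8 * q + 8) := by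
  simp only [fC, show (10 * q + 9) % 10 = 9 from by omega,
    show (10 * q + 9) / 10 = q from by omega]

lemma fA_adj (r m : ℕ) :
    (shallowVortexGrid (2 * r + 4)).Adj (fA r m) (fA r (m + 1)) :=
  adjH 3 (by omega) m (m + 1) rfl

lemma dec10 (m : ℕ) : ∃ q i, i < 10 ∧ m = 10 * q + i :=
  ⟨m / 10, m % 10, Nat.mod_lt _ (by omega), by omega⟩

lemma fB_adj (r m : ℕ) :
    (shallowVortexGrid (2 * r + 4)).Adj (fB r m) (fB r (m + 1)) := by
  obtain ⟨q, i, hi, rfl⟩ := dec10 m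
  interval_cases i
  · rw [fB_eq0, show 10 * q + 0 + 1 = 10 * q + 1 from by ring, fB_eq1]
    exact adjH 2 (by omega) _ _ (by omega)
  · rw [fB_eq1, show 10 * q + 1 + 1 = 10 * q + 2 from by ring, fB_eq2]
    exact adjH 2 (by omega) _ _ (by omega)
  · rw [fB_eq2, show 10 * q + 2 + 1 = 10 * q + 3 from by ring, fB_eq3]
    exact (adjV 1 (by omega) _).symm
  · rw [fB_eq3, show 10 * q + 3 + 1 = 10 * q + 4 from by ring, fB_eq4]
    exact (adjV 0 (by omega) _).symm
  · rw [fB_eq4, show 10 * q + 4 + 1 = 10 * q + 5 from by ring, fB_eq5]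
    exact adjBD (2 * q) _ _ (by ring) (by ring)
  · rw [fB_eq5, show 10 * q + 5 + 1 = 10 * q + 6 from by ring, fB_eq6]
    exact adjH 0 (by omega) _ _ (by omega)
  · rw [fB_eq6, show 10 * q + 6 + 1 = 10 * q + 7 from by ring, fB_eq7]
    exact adjAC (2 * q + 1) _ _ (by ring) (by ring)
  · rw [fB_eq7, show 10 * q + 7 + 1 = 10 * q + 8 from by ring, fB_eq8]
    exact adjV 0 (by omega) _
  · rw [fB_eq8, show 10 * q + 8 + 1 = 10 * q + 9 from by ring, fB_eq9]
    exact adjV 1 (by omega) _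
  · rw [fB_eq9, show 10 * q + 9 + 1 = 10 * (q + 1) + 0 from by ring, fB_eq0 r (q + 1)]
    exact adjH 2 (by omega) _ _ (by omega)

lemma fC_adj (r m : ℕ) :
    (shallowVortexGrid (2 * r + 4)).Adj (fC r m) (fC r (m + 1)) := by
  obtain ⟨q, i, hi, rfl⟩ := dec10 m
  interval_cases i
  · rw [fC_eq0, show 10 * q + 0 + 1 = 10 * q + 1 from by ring, fC_eq1]
    exact adjH 1 (by omega) _ _ (by omega)
  · rw [fC_eq1, show 10 * q + 1 + 1 = 10 * q + 2 from by ring, fC_eq2]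
    exact (adjV 0 (by omega) _).symm
  · rw [fC_eq2, show 10 * q + 2 + 1 = 10 * q + 3 from by ring, fC_eq3]
    exact adjAC (2 * q) _ _ (by ring) (by ring)
  · rw [fC_eq3, show 10 * q + 3 + 1 = 10 * q + 4 from by ring, fC_eq4]
    exact adjV 0 (by omega) _
  · rw [fC_eq4, show 10 * q + 4 + 1 = 10 * q + 5 from by ring, fC_eq5]
    exact adjH 1 (by omega) _ _ (by omega)
  · rw [fC_eq5, show 10 * q + 5 + 1 = 10 * q + 6 from by ring, fC_eq6]
    exact adjH 1 (by omega) _ _ (by omega)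
  · rw [fC_eq6, show 10 * q + 6 + 1 = 10 * q + 7 from by ring, fC_eq7]
    exact adjH 1 (by omega) _ _ (by omega)
  · rw [fC_eq7, show 10 * q + 7 + 1 = 10 * q + 8 from by ring, fC_eq8]
    exact (adjV 0 (by omega) _).symm
  · rw [fC_eq8, show 10 * q + 8 + 1 = 10 * q + 9 from by ring, fC_eq9]
    exact adjBD (2 * q + 1) _ _ (by ring) (by ring)
  · rw [fC_eq9, show 10 * q + 9 + 1 = 10 * (q + 1) + 0 from by ring, fC_eq0 r (q + 1),
      show 8 * (q + 1) + 0 = 8 * q + 8 from by ring]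
    exact adjV 0 (by omega) _

lemma connected_range {W : Type*} (G : SimpleGraph W) (f : ℕ → W)
    (h : ∀ m, G.Adj (f m) (f (m + 1))) : (G.induce (Set.range f)).Connected := by
  rw [SimpleGraph.connected_iff_exists_forall_reachable]
  refine ⟨⟨f 0, 0, rfl⟩, ?_⟩
  rintro ⟨w, m, rfl⟩
  induction m with
  | zero => exact SimpleGraph.Reachable.refl _
  | succ m ih =>
      refine ih.trans (SimpleGraph.Adj.reachable ?_)
      exact h m

/-- code of a vertex, recording the row and the column residue mod 8. -/
def code (r : ℕ) (v : Fin (2 * r + 4) × ZMod (4 * (2 * r + 4))) : ℕ :=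
  (v.1 : ℕ) * 8 + v.2.val % 8

lemma val_mod8 (r a : ℕ) : ((a : ZMod (4 * (2 * r + 4))).val) % 8 = a % 8 := by
  haveI : NeZero (4 * (2 * r + 4)) := ⟨by omega⟩
  rw [ZMod.val_natCast]
  exact Nat.mod_mod_of_dvd a ⟨r + 2, by ring⟩

lemma code_vx (r i : ℕ) (h) (c : ℕ) : code r (vx r i h c) = i * 8 + c % 8 := by
  simp only [code, vx_fst, vx_snd, val_mod8]

lemma code_A (r m : ℕ) : code r (fA r m) = 24 + m % 8 := by
  rw [fA, code_vx]

lemma code_B (r m : ℕ) :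
    code r (fB r m) = 16 ∨ code r (fB r m) = 17 ∨ code r (fB r m) = 18 ∨
    code r (fB r m) = 10 ∨ code r (fB r m) = 2 ∨ code r (fB r m) = 4 ∨
    code r (fB r m) = 5 ∨ code r (fB r m) = 7 ∨ code r (fB r m) = 15 ∨
    code r (fB r m) = 23 := by
  obtain ⟨q, i, hi, rfl⟩ := dec10 m
  interval_cases i
  · rw [fB_eq0, code_vx]; omega
  · rw [fB_eq1, code_vx]; omega
  · rw [fB_eq2, code_vx]; omega
  · rw [fB_eq3, code_vx]; omega
  · rw [fB_eq4, code_vx]; omega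
  · rw [fB_eq5, code_vx]; omega
  · rw [fB_eq6, code_vx]; omega
  · rw [fB_eq7, code_vx]; omega
  · rw [fB_eq8, code_vx]; omega
  · rw [fB_eq9, code_vx]; omega

lemma code_C (r m : ℕ) :
    code r (fC r m) = 8 ∨ code r (fC r m) = 9 ∨ code r (fC r m) = 1 ∨
    code r (fC r m) = 3 ∨ code r (fC r m) = 11 ∨ code r (fC r m) = 12 ∨
    code r (fC r m) = 13 ∨ code r (fC r m) = 14 ∨ code r (fC r m) = 6 ∨
    code r (fC r m) = 0 := by
  obtain ⟨q, i, hi, rfl⟩ := dec10 m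
  interval_cases i
  · rw [fC_eq0, code_vx]; omega
  · rw [fC_eq1, code_vx]; omega
  · rw [fC_eq2, code_vx]; omega
  · rw [fC_eq3, code_vx]; omega
  · rw [fC_eq4, code_vx]; omega
  · rw [fC_eq5, code_vx]; omega
  · rw [fC_eq6, code_vx]; omega
  · rw [fC_eq7, code_vx]; omega
  · rw [fC_eq8, code_vx]; omega
  · rw [fC_eq9, code_vx]; omega

lemma code_pt (r t : ℕ) : code r (pt r t) = 19 := by
  rw [pt, code_vx]; omega

/-- The branch set assignment. -/
def XX (r : ℕ) : Fin 3 ⊕ Fin r → Set (Fin (2 * r + 4) × ZMod (4 * (2 * r + 4))) :=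
  Sum.elim (![Set.range (fA r), Set.range (fB r), Set.range (fC r)])
    (fun t => {pt r (t : ℕ)})

end Stmt7Aux

open Stmt7Aux in
/-- Section 1.1. For every `r ∈ ℕ`, the complete bipartite graph `K_{3,r}` is a
minor of the shallow-vortex grid `V_k` for some `k ≥ 1`; i.e. `K_{3,r}` is a shallow-vortex
minor. -/
theorem stmt_7 (r : ℕ) :
    ∃ k : ℕ, 1 ≤ k ∧
      IsMinorOf (completeBipartiteGraph (Fin 3) (Fin r)) (shallowVortexGrid k) := by
  refine ⟨2 * r + 4, by omega, XX r, ?_, ?_, ?_, ?_⟩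
  · -- nonempty
    rintro (i | t)
    · fin_cases i
      · exact ⟨fA r 0, 0, rfl⟩
      · exact ⟨fB r 0, 0, rfl⟩
      · exact ⟨fC r 0, 0, rfl⟩
    · exact ⟨pt r t, rfl⟩
  · -- disjoint
    rintro (i | s) (j | t) hab
    · fin_cases i <;> fin_cases j <;> (try simp at hab) <;>
        · rw [Set.disjoint_left]
          rintro v ⟨m, rfl⟩ ⟨m', he⟩
          first
          | (have c1 := code_A r m
             have c2 := code_B r m'
             rw [he] at c2; omega)
          | (have c1 := code_A r m
             have c2 := code_C r m'
             rw [he] at c2; omega)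
          | (have c1 := code_B r m
             have c2 := code_A r m'
             rw [he] at c2; omega)
          | (have c1 := code_B r m
             have c2 := code_C r m'
             rw [he] at c2; omega)
          | (have c1 := code_C r m
             have c2 := code_A r m'
             rw [he] at c2; omega)
          | (have c1 := code_C r m
             have c2 := code_B r m'
             rw [he] at c2; omega)
    · fin_cases i <;>
        · rw [Set.disjoint_left]
          rintro v ⟨m, rfl⟩ he
          rw [show XX r (Sum.inr t) = {pt r (t : ℕ)} from rfl, Set.mem_singleton_iff] at he
          first
          | (have c1 := code_A r m; rw [he] at c1
             have c2 := code_pt r (t : ℕ); omega)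
          | (have c1 := code_B r m; rw [he] at c1
             have c2 := code_pt r (t : ℕ); omega)
          | (have c1 := code_C r m; rw [he] at c1
             have c2 := code_pt r (t : ℕ); omega)
    · fin_cases j <;>
        · rw [Set.disjoint_left]
          rintro v he ⟨m, rfl⟩
          rw [show XX r (Sum.inr s) = {pt r (s : ℕ)} from rfl, Set.mem_singleton_iff] at he
          first
          | (have c1 := code_A r m; rw [he] at c1
             have c2 := code_pt r (s : ℕ); omega)
          | (have c1 := code_B r m; rw [he] at c1
             have c2 := code_pt r (s : ℕ); omega)
          | (have c1 := code_C r m; rw [he] at c1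
             have c2 := code_pt r (s : ℕ); omega)
    · rw [Set.disjoint_left]
      rintro v he he'
      rw [show XX r (Sum.inr s) = {pt r (s : ℕ)} from rfl, Set.mem_singleton_iff] at he
      rw [show XX r (Sum.inr t) = {pt r (t : ℕ)} from rfl, Set.mem_singleton_iff] at he'
      exfalso
      apply hab
      have h2 : pt r (s : ℕ) = pt r (t : ℕ) := by rw [← he, he']
      have h3 := congrArg Prod.snd h2
      simp only [pt, vx_snd] at h3
      rw [ZMod.natCast_eq_natCast_iff'] at h3
      have hs : 8 * (s : ℕ) + 3 < 4 * (2 * r + 4) := by have := s.isLt; omega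
      have ht : 8 * (t : ℕ) + 3 < 4 * (2 * r + 4) := by have := t.isLt; omega
      rw [Nat.mod_eq_of_lt hs, Nat.mod_eq_of_lt ht] at h3
      have : (s : ℕ) = (t : ℕ) := by omega
      congr 1
      exact Fin.ext this
  · -- connected
    rintro (i | t)
    · fin_cases i
      · exact connected_range _ _ (fA_adj r)
      · exact connected_range _ _ (fB_adj r)
      · exact connected_range _ _ (fC_adj r)
    · show ((shallowVortexGrid (2 * r + 4)).induce {pt r (t : ℕ)}).Connected
      rw [SimpleGraph.induce_singleton_eq_top]
      exact SimpleGraph.connected_top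
  · -- edges
    rintro (i | s) (j | t) hadj
    · simp at hadj
    · fin_cases i
      · refine ⟨fA r (8 * (t : ℕ) + 3), ⟨8 * (t : ℕ) + 3, rfl⟩, pt r (t : ℕ), rfl, ?_⟩
        exact (adjV 2 (by omega) _).symm
      · refine ⟨fB r (10 * (t : ℕ) + 2), ⟨10 * (t : ℕ) + 2, rfl⟩, pt r (t : ℕ), rfl, ?_⟩
        rw [fB_eq2]
        exact adjH 2 (by omega) _ _ (by omega)
      · refine ⟨fC r (10 * (t : ℕ) + 4), ⟨10 * (t : ℕ) + 4, rfl⟩, pt r (t : ℕ), rfl, ?_⟩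
        rw [fC_eq4]
        exact adjV 1 (by omega) _
    · fin_cases j
      · refine ⟨pt r (s : ℕ), rfl, fA r (8 * (s : ℕ) + 3), ⟨8 * (s : ℕ) + 3, rfl⟩, ?_⟩
        exact adjV 2 (by omega) _
      · refine ⟨pt r (s : ℕ), rfl, fB r (10 * (s : ℕ) + 2), ⟨10 * (s : ℕ) + 2, rfl⟩, ?_⟩
        rw [fB_eq2]
        exact (adjH 2 (by omega) _ _ (by omega)).symm
      · refine ⟨pt r (s : ℕ), rfl, fC r (10 * (s : ℕ) + 4), ⟨10 * (s : ℕ) + 4, rfl⟩, ?_⟩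
        rw [fC_eq4]
        exact (adjV 1 (by omega) _).symm
    · simp at hadj
end

section
/- For every integer k ≥ 3 and every finite graph G, if |E(G)| > 2^k · |V(G)| then G contains the complete graph K_k as a minor. (The combinatorial content of Proposition 4.4 of the paper, due to Robertson and Seymour.) -/
open SimpleGraph

universe u

namespace Stmt9

variable {V : Type*} {A : Type*}

/-- A single step within a set `s`. -/
def Step (G : SimpleGraph V) (s : Set V) (u v : V) : Prop := u ∈ s ∧ v ∈ s ∧ G.Adj u v

/-- connectivity of a vertex set via reflexive-transitive closure of steps in `s`. -/
def ConnOn (G : SimpleGraph V) (s : Set V) : Prop :=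
  s.Nonempty ∧ ∀ a ∈ s, ∀ b ∈ s, Relation.ReflTransGen (Step G s) a b

/-- A minor-model of the complete graph on A inside G. -/
def Model (G : SimpleGraph V) (X : A → Set V) : Prop :=
  (∀ a, (X a).Nonempty) ∧ (∀ a b, a ≠ b → Disjoint (X a) (X b)) ∧
  (∀ a, ConnOn G (X a)) ∧ ∀ a b : A, a ≠ b → ∃ u ∈ X a, ∃ v ∈ X b, G.Adj u v

lemma ConnOn.connected {G : SimpleGraph V} {s : Set V} (h : ConnOn G s) :
    (G.induce s).Connected := by
  obtain ⟨⟨w, hw⟩, hreach⟩ := h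
  refine { nonempty := ⟨⟨w, hw⟩⟩, preconnected := ?_ }
  rintro ⟨a, ha⟩ ⟨b, hb⟩
  have h2 := hreach a ha b hb
  suffices H : ∀ c, Relation.ReflTransGen (Step G s) a c →
      ∀ hc : c ∈ s, (G.induce s).Reachable ⟨a, ha⟩ ⟨c, hc⟩ from H b h2 hb
  intro c h2
  induction h2 with
  | refl => intro hc; exact Reachable.refl _
  | @tail c d hcd hstep ih =>
      intro hd2
      obtain ⟨hc, hd, hadj⟩ := hstep
      exact (ih hc).trans (SimpleGraph.Adj.reachable (by simpa using hadj :
        (G.induce s).Adj ⟨c, hc⟩ ⟨d, hd2⟩))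

lemma connOn_singleton (G : SimpleGraph V) (v : V) : ConnOn G {v} := by
  refine ⟨⟨v, rfl⟩, ?_⟩
  rintro a rfl b rfl
  exact Relation.ReflTransGen.refl

lemma step_symm {G : SimpleGraph V} {s : Set V} : Symmetric (Step G s) := by
  rintro u v ⟨hu, hv, h⟩; exact ⟨hv, hu, h.symm⟩

/-- Lifting a model through an induced subgraph. -/
lemma Model.induceLift {G : SimpleGraph V} {s : Set V} {Y : A → Set s}
    (h : Model (G.induce s) Y) : Model G (fun a => Subtype.val '' Y a) := by
  obtain ⟨hne, hdisj, hconn, hedge⟩ := h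
  refine ⟨fun a => (hne a).image _, ?_, ?_, ?_⟩
  · intro a b hab
    exact (Set.disjoint_image_iff Subtype.val_injective).mpr (hdisj a b hab)
  · intro a
    refine ⟨(hne a).image _, ?_⟩
    rintro _ ⟨p, hp, rfl⟩ _ ⟨q, hq, rfl⟩
    have h2 := (hconn a).2 p hp q hq
    refine Relation.ReflTransGen.lift Subtype.val ?_ _ _ h2
    rintro u v ⟨hu, hv, hadj⟩
    exact ⟨⟨u, hu, rfl⟩, ⟨v, hv, rfl⟩, by simpa using hadj⟩
  · intro a b hab
    obtain ⟨u, hu, v, hv, hadj⟩ := hedge a b hab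
    exact ⟨u, ⟨u, hu, rfl⟩, v, ⟨v, hv, rfl⟩, by simpa using hadj⟩

/-! ### Contraction -/

/-- The graph obtained from `G` by contracting the edge `xy` onto `x` (deleting `y`). -/
def CGraph (G : SimpleGraph V) (x y : V) : SimpleGraph {z : V // z ≠ y} where
  Adj a b := (a : V) ≠ (b : V) ∧
    (G.Adj a b ∨ ((a : V) = x ∧ G.Adj y b) ∨ ((b : V) = x ∧ G.Adj y a))
  symm := by
    constructor; rintro a b ⟨hne, h⟩
    refine ⟨hne.symm, ?_⟩
    rcases h with h | ⟨h1, h2⟩ | ⟨h1, h2⟩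
    · exact Or.inl h.symm
    · exact Or.inr (Or.inr ⟨h1, h2⟩)
    · exact Or.inr (Or.inl ⟨h1, h2⟩)
  loopless := by constructor; rintro a ⟨hne, -⟩; exact hne rfl

lemma Model.contractLift {G : SimpleGraph V} {x y : V} (hadj : G.Adj x y)
    {Y : A → Set {z : V // z ≠ y}} (h : Model (CGraph G x y) Y) :
    ∃ X : A → Set V, Model G X := by
  have hxy : x ≠ y := hadj.ne
  set xx : {z : V // z ≠ y} := ⟨x, hxy⟩ with hxx
  refine ⟨fun a => Subtype.val '' Y a ∪ {w | w = y ∧ xx ∈ Y a}, ?_, ?_, ?_, ?_⟩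
  · intro a
    exact ((h.1 a).image _).mono Set.subset_union_left
  · intro a b hab
    have hd := h.2.1 a b hab
    rw [Set.disjoint_left]
    rintro w (⟨p, hp, rfl⟩ | ⟨rfl, hpx⟩) hw2
    · rcases hw2 with ⟨q, hq, hqe⟩ | ⟨hwy, -⟩
      · exact Set.disjoint_left.mp hd hp (Subtype.ext hqe ▸ hq)
      · exact p.2 hwy
    · rcases hw2 with ⟨q, hq, hqe⟩ | ⟨-, hqx⟩
      · exact q.2 hqe
      · exact (Set.disjoint_left.mp hd hpx) hqx
  · -- connectivity
    intro a
    set s : Set V := Subtype.val '' Y a ∪ {w | w = y ∧ xx ∈ Y a} with hs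
    have himg : ∀ p : {z : V // z ≠ y}, p ∈ Y a → (p : V) ∈ s :=
      fun p hp => Or.inl ⟨p, hp, rfl⟩
    have key : ∀ u v : {z : V // z ≠ y}, Step (CGraph G x y) (Y a) u v →
        Relation.ReflTransGen (Step G s) (u : V) (v : V) := by
      rintro u v ⟨hu, hv, hne, hcase⟩
      rcases hcase with hc | ⟨hux, hyv⟩ | ⟨hvx, hyu⟩
      · exact Relation.ReflTransGen.single ⟨himg u hu, himg v hv, hc⟩
      · -- u = x up to coe; path u → y → v
        have hxin : xx ∈ Y a := (Subtype.ext hux : u = xx) ▸ hu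
        have hyins : y ∈ s := Or.inr ⟨rfl, hxin⟩
        refine Relation.ReflTransGen.tail (Relation.ReflTransGen.single
          ⟨himg u hu, hyins, by rw [hux]; exact hadj⟩) ⟨hyins, himg v hv, hyv⟩
      · have hxin : xx ∈ Y a := (Subtype.ext hvx : v = xx) ▸ hv
        have hyins : y ∈ s := Or.inr ⟨rfl, hxin⟩
        refine Relation.ReflTransGen.tail (Relation.ReflTransGen.single
          ⟨himg u hu, hyins, hyu.symm⟩) ⟨hyins, himg v hv, by rw [hvx]; exact hadj.symm⟩
    have lift : ∀ p q : {z : V // z ≠ y}, p ∈ Y a → q ∈ Y a →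
        Relation.ReflTransGen (Step G s) (p : V) (q : V) := by
      intro p q hp hq
      have h2 := (h.2.2.1 a).2 p hp q hq
      clear hp hq
      induction h2 with
      | refl => exact Relation.ReflTransGen.refl
      | @tail c d hcd hstep ih => exact ih.trans (key c d hstep)
    obtain ⟨p0, hp0⟩ := h.1 a
    have reachbase : ∀ w ∈ s, Relation.ReflTransGen (Step G s) w (p0 : V) := by
      rintro w (⟨p, hp, rfl⟩ | ⟨rfl, hpx⟩)
      · exact lift p p0 hp hp0
      · refine Relation.ReflTransGen.head ⟨Or.inr ⟨rfl, hpx⟩, himg xx hpx, hadj.symm⟩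
          (lift xx p0 hpx hp0)
    refine ⟨⟨p0, himg p0 hp0⟩, fun w hw w' hw' => ?_⟩
    exact (reachbase w hw).trans
      ((@Std.Symm.symm _ _ (@Relation.ReflTransGen.stdSymm _ _ ⟨step_symm⟩) _ _) (reachbase w' hw'))
  · -- edges
    intro a b hab
    obtain ⟨u, hu, v, hv, hne, hcase⟩ := h.2.2.2 a b hab
    rcases hcase with hc | ⟨hux, hyv⟩ | ⟨hvx, hyu⟩
    · exact ⟨u, Or.inl ⟨u, hu, rfl⟩, v, Or.inl ⟨v, hv, rfl⟩, hc⟩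
    · have hxin : xx ∈ Y a := (Subtype.ext hux : u = xx) ▸ hu
      exact ⟨y, Or.inr ⟨rfl, hxin⟩, v, Or.inl ⟨v, hv, rfl⟩, hyv⟩
    · have hxin : xx ∈ Y b := (Subtype.ext hvx : v = xx) ▸ hv
      exact ⟨u, Or.inl ⟨u, hu, rfl⟩, y, Or.inr ⟨rfl, hxin⟩, hyu.symm⟩

/-! ### Edge counting for contraction -/

lemma contract_card [Fintype V] [DecidableEq V] {G : SimpleGraph V} [DecidableRel G.Adj]
    {x y : V} (hadj : G.Adj x y) [DecidableRel (CGraph G x y).Adj] :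
    G.edgeFinset.card ≤ (CGraph G x y).edgeFinset.card + 1 +
      (G.neighborFinset x ∩ G.neighborFinset y).card := by
  classical
  have hxy : x ≠ y := hadj.ne
  set W := {z : V // z ≠ y}
  let φ : V → W := fun z => if h : z = y then ⟨x, hxy⟩ else ⟨z, h⟩
  have hφy : φ y = ⟨x, hxy⟩ := dif_pos rfl
  have hφ : ∀ z (h : z ≠ y), φ z = ⟨z, h⟩ := fun z h => dif_neg h
  let f : Sym2 V → Sym2 W := Sym2.map φ
  set S : Finset (Sym2 V) := G.edgeFinset.erase s(x, y) with hS
  set Amap : Finset (Sym2 V) :=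
    (G.neighborFinset x ∩ G.neighborFinset y).image (fun w => s(y, w)) with hA
  -- dichotomy for elements of S \ Amap
  have dich : ∀ e ∈ S \ Amap, (Sym2.map Subtype.val (f e) = e ∧ y ∉ e) ∨
      (∃ w, w ≠ x ∧ w ≠ y ∧ ¬ G.Adj x w ∧ G.Adj y w ∧ e = s(y, w) ∧
        f e = s(⟨x, hxy⟩, φ w)) := by
    intro e he
    induction e using Sym2.ind with
    | _ u v =>
      rw [Finset.mem_sdiff, hS, Finset.mem_erase] at he
      obtain ⟨⟨hnexy, hedge⟩, hnA⟩ := he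
      rw [SimpleGraph.mem_edgeFinset, SimpleGraph.mem_edgeSet] at hedge
      by_cases hu : u = y
      · have hedge' : G.Adj y v := by rw [hu] at hedge; exact hedge
        have hv : v ≠ y := fun h => G.loopless.irrefl y (by rw [h] at hedge'; exact hedge')
        have hvx : v ≠ x := by
          rintro rfl
          exact hnexy (by rw [hu]; exact Sym2.eq_swap)
        have hnadj : ¬ G.Adj x v := by
          intro hax
          apply hnA
          rw [hA, Finset.mem_image]
          refine ⟨v, ?_, by rw [hu]⟩
          rw [Finset.mem_inter, SimpleGraph.mem_neighborFinset, SimpleGraph.mem_neighborFinset]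
          exact ⟨hax, hedge'⟩
        refine Or.inr ⟨v, hvx, hv, hnadj, hedge', by rw [hu], ?_⟩
        show Sym2.map φ s(u, v) = _
        rw [Sym2.map_pair_eq, hu, hφy]
      · by_cases hv : v = y
        · have hedge' : G.Adj y u := by rw [hv] at hedge; exact hedge.symm
          have hux : u ≠ x := fun h => hnexy (by rw [h, hv])
          have hnadj : ¬ G.Adj x u := by
            intro hax
            apply hnA
            rw [hA, Finset.mem_image]
            refine ⟨u, ?_, by rw [hv]; exact Sym2.eq_swap⟩
            rw [Finset.mem_inter, SimpleGraph.mem_neighborFinset, SimpleGraph.mem_neighborFinset]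
            exact ⟨hax, hedge'⟩
          refine Or.inr ⟨u, hux, hu, hnadj, hedge', by rw [hv]; exact Sym2.eq_swap, ?_⟩
          show Sym2.map φ s(u, v) = _
          rw [Sym2.map_pair_eq, hv, hφy]
          exact Sym2.eq_swap
        · refine Or.inl ⟨?_, ?_⟩
          · show Sym2.map Subtype.val (Sym2.map φ s(u, v)) = s(u, v)
            rw [Sym2.map_pair_eq, hφ u hu, hφ v hv, Sym2.map_pair_eq]
          · rw [Sym2.mem_iff]
            rintro (h | h) <;> [exact hu h.symm; exact hv h.symm]
  -- the image of S \ Amap consists of edges of the contraction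
  have hmem : ∀ e ∈ S \ Amap, f e ∈ (CGraph G x y).edgeFinset := by
    intro e he
    induction e using Sym2.ind with
    | _ u v =>
      have he' := he
      rw [Finset.mem_sdiff, hS, Finset.mem_erase] at he'
      obtain ⟨⟨hnexy, hedge⟩, hnA⟩ := he'
      rw [SimpleGraph.mem_edgeFinset, SimpleGraph.mem_edgeSet] at hedge
      rw [SimpleGraph.mem_edgeFinset]
      rcases dich _ he with ⟨hfix, hny⟩ | ⟨w, hwx, hwy, hnadj, hyadj, hew, hfe⟩
      · have hu : u ≠ y := fun h => hny (by rw [← h]; exact Sym2.mem_mk_left u v)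
        have hv : v ≠ y := fun h => hny (by rw [← h]; exact Sym2.mem_mk_right u v)
        show Sym2.map φ s(u, v) ∈ _
        rw [Sym2.map_pair_eq, hφ u hu, hφ v hv, SimpleGraph.mem_edgeSet]
        exact ⟨by simpa using hedge.ne, Or.inl hedge⟩
      · show f s(u, v) ∈ _
        rw [hfe, SimpleGraph.mem_edgeSet, hφ w hwy]
        exact ⟨by simpa using Ne.symm hwx, Or.inr (Or.inl ⟨rfl, hyadj⟩)⟩
  -- injectivity on S \ Amap
  have hinj : Set.InjOn f ↑(S \ Amap) := by
    intro e1 he1 e2 he2 hfe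
    rw [Finset.mem_coe] at he1 he2
    have edge1 : e1 ∈ G.edgeSet := by
      have := (Finset.mem_sdiff.mp he1).1
      rw [hS] at this
      exact SimpleGraph.mem_edgeFinset.mp (Finset.mem_of_mem_erase this)
    have edge2 : e2 ∈ G.edgeSet := by
      have := (Finset.mem_sdiff.mp he2).1
      rw [hS] at this
      exact SimpleGraph.mem_edgeFinset.mp (Finset.mem_of_mem_erase this)
    rcases dich _ he1 with ⟨hfix1, hny1⟩ | ⟨w1, hwx1, hwy1, hnadj1, hyadj1, hew1, hfe1⟩ <;>
      rcases dich _ he2 with ⟨hfix2, hny2⟩ | ⟨w2, hwx2, hwy2, hnadj2, hyadj2, hew2, hfe2⟩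
    · rw [← hfix1, ← hfix2, hfe]
    · exfalso
      apply hnadj2
      have he1eq : e1 = s(x, w2) := by
        rw [← hfix1, hfe, hfe2, Sym2.map_pair_eq, hφ w2 hwy2]
      rw [he1eq, SimpleGraph.mem_edgeSet] at edge1
      exact edge1
    · exfalso
      apply hnadj1
      have he2eq : e2 = s(x, w1) := by
        rw [← hfix2, ← hfe, hfe1, Sym2.map_pair_eq, hφ w1 hwy1]
      rw [he2eq, SimpleGraph.mem_edgeSet] at edge2
      exact edge2
    · rw [hfe1, hfe2, Sym2.eq_iff] at hfe
      rcases hfe with ⟨-, hww⟩ | ⟨hx1, -⟩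
      · rw [hφ w1 hwy1, hφ w2 hwy2, Subtype.mk.injEq] at hww
        rw [hew1, hew2, hww]
      · exfalso
        rw [hφ w2 hwy2] at hx1
        rw [Subtype.ext_iff] at hx1
        exact hwx2 (by simpa using hx1.symm)
  have h1 : (S \ Amap).card ≤ (CGraph G x y).edgeFinset.card :=
    Finset.card_le_card_of_injOn f hmem hinj
  have h2 : S.card - Amap.card ≤ (S \ Amap).card := Finset.le_card_sdiff _ _
  have h3 : Amap.card ≤ (G.neighborFinset x ∩ G.neighborFinset y).card := by
    rw [hA]; exact Finset.card_image_le
  have h4 : S.card = G.edgeFinset.card - 1 := by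
    rw [hS, Finset.card_erase_of_mem]
    rwa [SimpleGraph.mem_edgeFinset, SimpleGraph.mem_edgeSet]
  have h5 : 1 ≤ G.edgeFinset.card := by
    rw [Finset.one_le_card]
    exact ⟨s(x, y), by rwa [SimpleGraph.mem_edgeFinset, SimpleGraph.mem_edgeSet]⟩
  omega

/-! ### Dense neighbourhood -/

lemma nbhd_edges [Fintype V] [DecidableEq V] {G : SimpleGraph V} [DecidableRel G.Adj]
    (x : V) (K : ℕ)
    (hmin : ∀ z ∈ G.neighborFinset x, K ≤ (G.neighborFinset x ∩ G.neighborFinset z).card) :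
    K * (G.neighborFinset x).card ≤
      2 * (G.induce (↑(G.neighborFinset x) : Set V)).edgeSet.ncard := by
  classical
  set s : Set V := ↑(G.neighborFinset x) with hs
  set H : SimpleGraph s := G.induce s with hH
  have hcardE : H.edgeSet.ncard = H.edgeFinset.card := by
    rw [← SimpleGraph.coe_edgeFinset, Set.ncard_coe_finset]
  have hdeg : ∀ p : s, K ≤ H.degree p := by
    intro p
    have hps : (p : V) ∈ G.neighborFinset x := Finset.mem_coe.mp p.2
    set T := G.neighborFinset x ∩ G.neighborFinset (p : V) with hT
    have hTle : T.card ≤ (H.neighborFinset p).card := by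
      have hc : T.card = T.attach.card := Finset.card_attach.symm
      rw [hc]
      refine Finset.card_le_card_of_injOn
        (fun w => (⟨(w : V), Finset.mem_coe.mpr (Finset.mem_inter.mp w.2).1⟩ : s)) ?_ ?_
      · intro w _
        rw [Finset.mem_coe, SimpleGraph.mem_neighborFinset]
        have hw2 : G.Adj (p : V) (w : V) := by
          have := (Finset.mem_inter.mp w.2).2
          rwa [SimpleGraph.mem_neighborFinset] at this
        exact (SimpleGraph.comap_adj).mpr hw2
      · intro w _ w' _ hww
        rw [Subtype.mk.injEq] at hww
        exact Subtype.ext hww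
    calc K ≤ T.card := hmin (p : V) hps
    _ ≤ (H.neighborFinset p).card := hTle
    _ = H.degree p := rfl
  have hsum : K * Fintype.card s ≤ ∑ p : s, H.degree p := by
    calc K * Fintype.card s = ∑ _p : s, K := by
          rw [Finset.sum_const, Finset.card_univ, smul_eq_mul, mul_comm]
    _ ≤ ∑ p : s, H.degree p := Finset.sum_le_sum (fun p _ => hdeg p)
  rw [hcardE]
  have hcards : Fintype.card s = (G.neighborFinset x).card := Fintype.card_coe _
  calc K * (G.neighborFinset x).card = K * Fintype.card s := by rw [hcards]
  _ ≤ ∑ p : s, H.degree p := hsum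
  _ = 2 * H.edgeFinset.card := SimpleGraph.sum_degrees_eq_twice_card_edges H

/-! ### Main induction -/

theorem key (k : ℕ) (hk : 2 ≤ k) : ∀ (n : ℕ) (V : Type u) [Fintype V] (G : SimpleGraph V),
    Fintype.card V = n → 1 ≤ G.edgeSet.ncard → 2 ^ k * n ≤ G.edgeSet.ncard →
    ∃ X : Fin k → Set V, Model G X := by
  induction k, hk using Nat.le_induction with
  | base =>
    intro n V _ G _ h1 _
    obtain ⟨u, v, huv⟩ : ∃ u v, G.Adj u v := by
      obtain ⟨e, he⟩ := Set.nonempty_of_ncard_ne_zero (by omega : G.edgeSet.ncard ≠ 0)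
      induction e using Sym2.ind with
      | _ u v => exact ⟨u, v, he⟩
    refine ⟨Fin.cons {u} (fun _ => {v}), ?_, ?_, ?_, ?_⟩
    · intro i
      induction i using Fin.cases with
      | zero => simp only [Fin.cons_zero]; exact ⟨u, rfl⟩
      | succ j => simp only [Fin.cons_succ]; exact ⟨v, rfl⟩
    · intro a b hab
      induction a using Fin.cases with
      | zero =>
        induction b using Fin.cases with
        | zero => exact absurd rfl hab
        | succ j =>
          simp only [Fin.cons_zero, Fin.cons_succ]
          exact Set.disjoint_singleton.mpr huv.ne
      | succ i =>
        induction b using Fin.cases with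
        | zero =>
          simp only [Fin.cons_zero, Fin.cons_succ]
          exact Set.disjoint_singleton.mpr huv.ne'
        | succ j => exact absurd (congrArg Fin.succ (Subsingleton.elim i j)) hab
    · intro i
      induction i using Fin.cases with
      | zero => simp only [Fin.cons_zero]; exact connOn_singleton G u
      | succ j => simp only [Fin.cons_succ]; exact connOn_singleton G v
    · intro a b hab
      induction a using Fin.cases with
      | zero =>
        induction b using Fin.cases with
        | zero => exact absurd rfl hab
        | succ j =>
          simp only [Fin.cons_zero, Fin.cons_succ]
          exact ⟨u, rfl, v, rfl, huv⟩
      | succ i =>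
        induction b using Fin.cases with
        | zero =>
          simp only [Fin.cons_zero, Fin.cons_succ]
          exact ⟨v, rfl, u, rfl, huv.symm⟩
        | succ j => exact absurd (congrArg Fin.succ (Subsingleton.elim i j)) hab
  | succ k hk IH =>
    intro n
    induction n using Nat.strong_induction_on with
    | _ n IHn =>
      intro V _ G hn h1 hE
      classical
      letI : DecidableEq V := Classical.decEq V
      letI : DecidableRel G.Adj := Classical.decRel _
      have hcardE : G.edgeSet.ncard = G.edgeFinset.card := by
        rw [← SimpleGraph.coe_edgeFinset, Set.ncard_coe_finset]
      obtain ⟨u, v, huv⟩ : ∃ u v, G.Adj u v := by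
        obtain ⟨e, he⟩ := Set.nonempty_of_ncard_ne_zero (by omega : G.edgeSet.ncard ≠ 0)
        induction e using Sym2.ind with
        | _ u v => exact ⟨u, v, he⟩
      have hn2 : 2 ≤ n := by
        rw [← hn]
        exact Fintype.one_lt_card_iff_nontrivial.mpr ⟨⟨u, v, huv.ne⟩⟩
      by_cases hcase : ∃ a b, G.Adj a b ∧
          (G.neighborFinset a ∩ G.neighborFinset b).card < 2 ^ (k + 1)
      · -- contraction case
        obtain ⟨a, b, hab, hc⟩ := hcase
        letI : DecidableRel (CGraph G a b).Adj := Classical.decRel _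
        have hWcard : Fintype.card {z : V // z ≠ b} = n - 1 := by
          rw [← hn]
          simp [Fintype.card_subtype_compl, Fintype.card_subtype_eq]
        have hcardE' : (CGraph G a b).edgeSet.ncard = (CGraph G a b).edgeFinset.card := by
          rw [← SimpleGraph.coe_edgeFinset, Set.ncard_coe_finset]
        have hcnt := contract_card hab
        obtain ⟨m, rfl⟩ : ∃ m, n = m + 2 := ⟨n - 2, by omega⟩
        have hP1 : 1 ≤ 2 ^ (k + 1) := Nat.one_le_two_pow
        have hmul : 2 ^ (k + 1) * (m + 2) = 2 ^ (k + 1) * (m + 1) + 2 ^ (k + 1) := by ring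
        have hE2 : 2 ^ (k + 1) * (m + 1) ≤ (CGraph G a b).edgeSet.ncard := by
          rw [hcardE']
          rw [hcardE] at hE
          omega
        have h12 : 1 ≤ (CGraph G a b).edgeSet.ncard := by
          have := Nat.one_le_two_pow (n := k + 1)
          calc 1 ≤ 2 ^ (k + 1) * (m + 1) := Nat.one_le_iff_ne_zero.mpr (by positivity)
          _ ≤ _ := hE2
        obtain ⟨Y, hY⟩ := IHn (m + 1) (by omega) {z : V // z ≠ b} (CGraph G a b)
          (by rw [hWcard]; omega) h12 hE2
        exact Model.contractLift hab hY
      · -- dense neighbourhood case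
        push_neg at hcase
        set s : Set V := ↑(G.neighborFinset u) with hs
        have hmin : ∀ z ∈ G.neighborFinset u, 2 ^ (k + 1) ≤
            (G.neighborFinset u ∩ G.neighborFinset z).card := by
          intro z hz
          exact hcase u z (by rwa [SimpleGraph.mem_neighborFinset] at hz)
        have hdeg := nbhd_edges u (2 ^ (k + 1)) hmin
        have hd1 : 1 ≤ (G.neighborFinset u).card := by
          rw [Finset.one_le_card]
          exact ⟨v, by rwa [SimpleGraph.mem_neighborFinset]⟩
        have hcards : Fintype.card s = (G.neighborFinset u).card := Fintype.card_coe _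
        have heH : 2 ^ k * Fintype.card s ≤ (G.induce s).edgeSet.ncard := by
          rw [pow_succ, mul_comm (2 ^ k) 2, mul_assoc] at hdeg
          rw [hcards]
          exact Nat.le_of_mul_le_mul_left hdeg (by norm_num)
        have hdeg' : 2 ^ (k + 1) * (G.neighborFinset u).card ≤
            2 * (G.induce s).edgeSet.ncard := hdeg
        have heH1 : 1 ≤ (G.induce s).edgeSet.ncard := by
          have h2 : 2 ≤ 2 ^ (k + 1) * (G.neighborFinset u).card := by
            calc 2 = 2 * 1 := by norm_num
            _ ≤ 2 ^ (k + 1) * (G.neighborFinset u).card := by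
                apply Nat.mul_le_mul _ hd1
                calc 2 = 2 ^ 1 := by norm_num
                _ ≤ 2 ^ (k + 1) := Nat.pow_le_pow_right (by norm_num) (by omega)
          omega
        obtain ⟨Y, hY⟩ := IH (Fintype.card s) s (G.induce s) rfl heH1 heH
        have lift := Model.induceLift hY
        have hsub : ∀ j : Fin k, (fun a => Subtype.val '' Y a) j ⊆ s := by
          rintro j w ⟨p, _, rfl⟩
          exact p.2
        have hunotins : u ∉ s := by
          rw [hs, Finset.mem_coe, SimpleGraph.mem_neighborFinset]
          exact G.loopless.irrefl u
        refine ⟨Fin.cons {u} (fun j => Subtype.val '' Y j), ?_, ?_, ?_, ?_⟩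
        · intro i
          induction i using Fin.cases with
          | zero => simp only [Fin.cons_zero]; exact ⟨u, rfl⟩
          | succ j => simp only [Fin.cons_succ]; exact lift.1 j
        · intro i j hij
          induction i using Fin.cases with
          | zero =>
            induction j using Fin.cases with
            | zero => exact absurd rfl hij
            | succ j =>
              simp only [Fin.cons_zero, Fin.cons_succ]
              rw [Set.disjoint_left]
              rintro w rfl hw
              exact hunotins (hsub j hw)
          | succ i =>
            induction j using Fin.cases with
            | zero =>
              simp only [Fin.cons_zero, Fin.cons_succ]
              rw [Set.disjoint_right]
              rintro w rfl hw
              exact hunotins (hsub i hw)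
            | succ j =>
              simp only [Fin.cons_succ]
              exact lift.2.1 i j (fun h => hij (congrArg Fin.succ h))
        · intro i
          induction i using Fin.cases with
          | zero => simp only [Fin.cons_zero]; exact connOn_singleton G u
          | succ j => simp only [Fin.cons_succ]; exact lift.2.2.1 j
        · intro i j hij
          induction i using Fin.cases with
          | zero =>
            induction j using Fin.cases with
            | zero => exact absurd rfl hij
            | succ j =>
              simp only [Fin.cons_zero, Fin.cons_succ]
              obtain ⟨p, hp⟩ := hY.1 j
              refine ⟨u, rfl, p, ⟨p, hp, rfl⟩, ?_⟩
              have h3 : (p : V) ∈ G.neighborFinset u := Finset.mem_coe.mp (hsub j ⟨p, hp, rfl⟩)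
              rwa [SimpleGraph.mem_neighborFinset] at h3
          | succ i =>
            induction j using Fin.cases with
            | zero =>
              simp only [Fin.cons_zero, Fin.cons_succ]
              obtain ⟨p, hp⟩ := hY.1 i
              refine ⟨p, ⟨p, hp, rfl⟩, u, rfl, ?_⟩
              have h3 : (p : V) ∈ G.neighborFinset u := Finset.mem_coe.mp (hsub i ⟨p, hp, rfl⟩)
              rw [SimpleGraph.mem_neighborFinset] at h3
              exact h3.symm
            | succ j =>
              simp only [Fin.cons_succ]
              exact lift.2.2.2 i j (fun h => hij (congrArg Fin.succ h))

end Stmt9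

/-- Proposition 4.4, Robertson–Seymour. For every integer `k ≥ 3` and every
finite graph `G`, if `|E(G)| > 2^k · |V(G)|` then `G` contains `K_k` as a minor. -/
theorem stmt_9 {V : Type*} [Fintype V] (G : SimpleGraph V) (k : ℕ) (hk : 3 ≤ k)
    (hE : 2 ^ k * Fintype.card V < G.edgeSet.ncard) :
    IsMinorOf (⊤ : SimpleGraph (Fin k)) G := by
  have h1 : 1 ≤ G.edgeSet.ncard := by omega
  obtain ⟨X, hX⟩ := Stmt9.key k (by omega) (Fintype.card V) V G rfl h1 (le_of_lt hE)
  exact ⟨X, hX.1, hX.2.1, fun a => (hX.2.2.1 a).connected,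
    fun a b hab => hX.2.2.2 a b hab.ne⟩
end

section
/- Let h ∈ ℕ, c ∈ {0, 1, 2}, m ≥ 1, and let H be a graph that is a minor of the Dyck grid D^{(h,c)}_m. Then for every k ≥ 1, every H-cover S of D^{(h,c)}_{km} satisfies 2|S| ≥ k; in particular, the minimum size of an H-cover of D^{(h,c)}_n grows at least linearly in n. (Lemma 6.3 of the paper, with the surface-embeddability hypothesis replaced, via Proposition 2.2, by the hypothesis that H is a minor of some Dyck grid of the corresponding type.) -/
open SimpleGraph

lemma reach_chain {α : Type*} (G : SimpleGraph α) (P : Set α) (f : ℕ → α) :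
    ∀ n, (∀ i, i ≤ n → f i ∈ P) → (∀ i, i < n → G.Adj (f i) (f (i+1))) →
    ∀ (x y : P), (x : α) = f 0 → (y : α) = f n → (G.induce P).Reachable x y := by
  intro n
  induction n with
  | zero =>
    intro _ _ x y hx hy
    have : x = y := Subtype.ext (by rw [hx, hy])
    exact this ▸ Reachable.refl x
  | succ n ih =>
    intro hmem hadj x y hx hy
    have hfn : f n ∈ P := hmem n (Nat.le_succ n)
    have h1 : (G.induce P).Reachable x ⟨f n, hfn⟩ :=
      ih (fun i hi => hmem i (hi.trans (Nat.le_succ n)))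
        (fun i hi => hadj i (hi.trans (Nat.lt_succ_self n))) x ⟨f n, hfn⟩ hx rfl
    have hy' : y = ⟨f (n+1), hmem (n+1) le_rfl⟩ := Subtype.ext hy
    subst hy'
    have h2 : (G.induce P).Adj ⟨f n, hfn⟩ ⟨f (n+1), hmem (n+1) le_rfl⟩ :=
      hadj n (Nat.lt_succ_self n)
    exact h1.trans h2.reachable

lemma reach_mono {α : Type*} (G : SimpleGraph α) {P Q : Set α} (hPQ : P ⊆ Q) {x y : P}
    (h : (G.induce P).Reachable x y) :
    (G.induce Q).Reachable ⟨x, hPQ x.2⟩ ⟨y, hPQ y.2⟩ :=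
  h.map (G.induceHomOfLE hPQ).toHom

lemma induce_union_connected {α β : Type*} (G : SimpleGraph α) (G' : SimpleGraph β)
    (T : Set α) (hT : (G.induce T).Connected) (Y : α → Set β)
    (hne : ∀ v, (Y v).Nonempty)
    (hcon : ∀ v, (G'.induce (Y v)).Connected)
    (hadj : ∀ v w, G.Adj v w → ∃ x ∈ Y v, ∃ y ∈ Y w, G'.Adj x y) :
    (G'.induce (⋃ v ∈ T, Y v)).Connected := by
  set Z : Set β := ⋃ v ∈ T, Y v with hZ
  have hsub : ∀ v, v ∈ T → Y v ⊆ Z := fun v hv => Set.subset_biUnion_of_mem hv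
  obtain ⟨v0, hv0⟩ := hT.nonempty
  obtain ⟨x0, hx0⟩ := hne v0
  have key : ∀ (vv ww : T) (_ : (G.induce T).Walk vv ww) (x y : β)
      (hx : x ∈ Y ↑vv) (hy : y ∈ Y ↑ww),
      (G'.induce Z).Reachable ⟨x, hsub _ vv.2 hx⟩ ⟨y, hsub _ ww.2 hy⟩ := by
    intro vv ww p
    induction p with
    | @nil u =>
      intro x y hx hy
      exact reach_mono G' (hsub _ u.2) ((hcon _).preconnected ⟨x, hx⟩ ⟨y, hy⟩)
    | @cons u u' w' hadj' p ih =>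
      intro x y hx hy
      obtain ⟨x', hx', y', hy', hxy'⟩ := hadj u.1 u'.1 hadj'
      have h1 := reach_mono G' (hsub _ u.2) ((hcon _).preconnected ⟨x, hx⟩ ⟨x', hx'⟩)
      have h2 : (G'.induce Z).Adj ⟨x', hsub _ u.2 hx'⟩ ⟨y', hsub _ u'.2 hy'⟩ := hxy'
      exact h1.trans (h2.reachable.trans (ih y' y hy' hy))
  rw [connected_iff]
  refine ⟨?_, ⟨⟨x0, hsub v0 hv0 hx0⟩⟩⟩
  rintro ⟨x, hx⟩ ⟨y, hy⟩
  rw [hZ] at hx hy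
  simp only [Set.mem_iUnion] at hx hy
  obtain ⟨v, hv, hxv⟩ := hx
  obtain ⟨w, hw, hyw⟩ := hy
  obtain ⟨p⟩ := hT.preconnected ⟨v, hv⟩ ⟨w, hw⟩
  exact key ⟨v, hv⟩ ⟨w, hw⟩ p x y hxv hyw

lemma IsMinorOf.trans' {U V W : Type*} {H : SimpleGraph U} {G : SimpleGraph V}
    {G' : SimpleGraph W} (h1 : IsMinorOf H G) (h2 : IsMinorOf G G') : IsMinorOf H G' := by
  obtain ⟨X, hXne, hXdisj, hXconn, hXadj⟩ := h1
  obtain ⟨Y, hYne, hYdisj, hYconn, hYadj⟩ := h2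
  refine ⟨fun a => ⋃ v ∈ X a, Y v, ?_, ?_, ?_, ?_⟩
  · intro a
    obtain ⟨v, hv⟩ := hXne a
    obtain ⟨x, hx⟩ := hYne v
    exact ⟨x, Set.mem_biUnion hv hx⟩
  · intro a b hab
    rw [Set.disjoint_left]
    rintro z hz1 hz2
    simp only [Set.mem_iUnion] at hz1 hz2
    obtain ⟨v, hv, hzv⟩ := hz1
    obtain ⟨w, hw, hzw⟩ := hz2
    have hvw : v ≠ w := by
      rintro rfl
      exact (hXdisj a b hab).ne_of_mem hv hw rfl
    exact (hYdisj v w hvw).ne_of_mem hzv hzw rfl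
  · intro a
    exact induce_union_connected G G' (X a) (hXconn a) Y hYne hYconn hYadj
  · intro a b hab
    obtain ⟨v, hv, w, hw, hvw⟩ := hXadj a b hab
    obtain ⟨x, hx, y, hy, hxy⟩ := hYadj v w hvw
    exact ⟨x, Set.mem_biUnion hv hx, y, Set.mem_biUnion hw hy, hxy⟩

lemma isMinorOf_induce_of_sets {A W : Type*} (Hg : SimpleGraph A) (G : SimpleGraph W)
    (s : Set W) (B : A → Set W) (hsub : ∀ a, B a ⊆ s) (hne : ∀ a, (B a).Nonempty)
    (hdisj : ∀ a b, a ≠ b → Disjoint (B a) (B b))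
    (hconn : ∀ a, (G.induce (B a)).Connected)
    (hadj : ∀ a b, Hg.Adj a b → ∃ x ∈ B a, ∃ y ∈ B b, G.Adj x y) :
    IsMinorOf Hg (G.induce s) := by
  refine ⟨fun a => {p : s | (p : W) ∈ B a}, ?_, ?_, ?_, ?_⟩
  · intro a
    obtain ⟨x, hx⟩ := hne a
    exact ⟨⟨x, hsub a hx⟩, hx⟩
  · intro a b hab
    rw [Set.disjoint_left]
    intro z hz1 hz2
    exact (hdisj a b hab).ne_of_mem hz1 hz2 rfl
  · intro a
    refine (hconn a).map ⟨fun z => ⟨⟨z.1, hsub a z.2⟩, z.2⟩, fun hzw => hzw⟩ ?_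
    rintro ⟨⟨w, hws⟩, hwB⟩
    exact ⟨⟨w, hwB⟩, rfl⟩
  · intro a b hab
    obtain ⟨x, hx, y, hy, hxy⟩ := hadj a b hab
    exact ⟨⟨x, hsub a hx⟩, hx, ⟨y, hsub b hy⟩, hy, hxy⟩

section Dyck

variable (h c m k a b : ℕ)

/-- column of the big grid corresponding to block `j'`, offset `t`. -/
def wcol (j' : ZMod (4*m*(1+h+c))) (t : ℕ) : ZMod (4*(k*m)*(1+h+c)) :=
  ((k * j'.val + t + 1 + (4*(k*m)*(1+h+c) - k) : ℕ) : ZMod (4*(k*m)*(1+h+c)))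

/-- the branch set of the vertex `u` of the small Dyck grid. -/
def BB (u : Fin m × ZMod (4*m*(1+h+c))) : Set (Fin (k*m) × ZMod (4*(k*m)*(1+h+c))) :=
  {p | ((p.1 : ℕ) = u.1.val * k + a ∧ ∃ t, t < k ∧ p.2 = wcol h c m k u.2 t)
     ∨ ((p.1 : ℕ) / k = u.1.val ∧ p.2 = wcol h c m k u.2 b)
     ∨ (u.1.val = 0 ∧ (p.1 : ℕ) / k = 0 ∧ p.2 = wcol h c m k u.2 (k - 1 - b))}

variable (hm : 1 ≤ m) (hk : 1 ≤ k)

lemma hNeqk : 4*(k*m)*(1+h+c) = k*(4*m*(1+h+c)) := by ring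

include hm in
lemma hkN : k ≤ 4*(k*m)*(1+h+c) := by
  rw [hNeqk]
  calc k = k * 1 := (mul_one k).symm
  _ ≤ k * (4*m*(1+h+c)) := Nat.mul_le_mul_left k (Nat.one_le_iff_ne_zero.mpr (by positivity : (0:ℕ) < 4*m*(1+h+c)).ne')

include hm hk in
lemma gval (j' : ZMod (4*m*(1+h+c))) (t : ℕ) (ht : t < k) :
    ((wcol h c m k j' t).val + (k-1)) % (4*(k*m)*(1+h+c)) = k * j'.val + t := by
  have hM : 0 < 4*m*(1+h+c) := by positivity
  haveI : NeZero (4*m*(1+h+c)) := ⟨hM.ne'⟩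
  have hjv : j'.val < 4*m*(1+h+c) := ZMod.val_lt j'
  have hkm : k * j'.val + t < 4*(k*m)*(1+h+c) := by
    have h1 : k * j'.val + t < k * (4*m*(1+h+c)) := by
      calc k * j'.val + t < k * j'.val + k := by omega
      _ = k * (j'.val + 1) := by ring
      _ ≤ k * (4*m*(1+h+c)) := Nat.mul_le_mul_left k (by omega)
    rw [hNeqk] at *
    omega
  have hK : k ≤ 4*(k*m)*(1+h+c) := hkN h c m k hm
  rw [wcol, ZMod.val_natCast, Nat.mod_add_mod]
  have e : k * j'.val + t + 1 + (4*(k*m)*(1+h+c) - k) + (k-1)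
      = (k * j'.val + t) + 4*(k*m)*(1+h+c) := by
    generalize k * j'.val = X at *
    generalize 4*(k*m)*(1+h+c) = Nn at *
    omega
  rw [e, Nat.add_mod_right, Nat.mod_eq_of_lt hkm]

lemma cast_kM : ((k*(4*m*(1+h+c)) : ℕ) : ZMod (4*(k*m)*(1+h+c))) = 0 := by
  rw [← hNeqk h c m k]
  exact ZMod.natCast_self _

lemma cast_mul_mod (cn : ℕ) :
    ((k * (cn % (4*m*(1+h+c))) : ℕ) : ZMod (4*(k*m)*(1+h+c)))
      = ((k * cn : ℕ) : ZMod (4*(k*m)*(1+h+c))) := by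
  conv_rhs => rw [← Nat.div_add_mod cn (4*m*(1+h+c))]
  have hz := cast_kM h c m k
  push_cast at hz ⊢
  linear_combination (-((cn / (4*m*(1+h+c)) : ℕ) : ZMod (4*(k*m)*(1+h+c)))) * hz

lemma wcol_succ (j' : ZMod (4*m*(1+h+c))) (t : ℕ) :
    wcol h c m k j' (t+1) = wcol h c m k j' t + 1 := by
  rw [wcol, wcol]
  push_cast
  ring

lemma wcol_natCast (cn t : ℕ) :
    wcol h c m k ((cn : ℕ) : ZMod (4*m*(1+h+c))) t
      = ((k * cn + t + 1 + (4*(k*m)*(1+h+c) - k) : ℕ) : ZMod (4*(k*m)*(1+h+c))) := by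
  rw [wcol, ZMod.val_natCast]
  have hz := cast_mul_mod h c m k cn
  push_cast at hz ⊢
  linear_combination hz

include hm hk in
lemma hNgt1 : 1 < 4*(k*m)*(1+h+c) := by
  have h1 : 1 ≤ k*m := by simpa using Nat.mul_le_mul hk hm
  have h2 : 4*1*1 ≤ 4*(k*m)*(1+h+c) :=
    Nat.mul_le_mul (Nat.mul_le_mul (le_refl 4) h1) (by omega)
  omega

include hm hk in
lemma adj_horiz (r : Fin (k*m)) (x : ZMod (4*(k*m)*(1+h+c))) :
    (dyckGrid h c (k*m)).Adj (r, x) (r, x+1) := by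
  haveI : Fact (1 < 4*(k*m)*(1+h+c)) := ⟨hNgt1 h c m k hm hk⟩
  rw [dyckGrid, fromRel_adj]
  refine ⟨?_, Or.inl (Or.inl (Or.inl ⟨rfl, rfl⟩))⟩
  intro hEq
  have h2 : x = x + 1 := congrArg Prod.snd hEq
  have h3 : x + 0 = x + 1 := by rw [add_zero]; exact h2
  exact one_ne_zero (add_left_cancel h3).symm

lemma adj_vert (r1 r2 : Fin (k*m)) (hr : (r1:ℕ)+1 = r2) (x : ZMod (4*(k*m)*(1+h+c))) :
    (dyckGrid h c (k*m)).Adj (r1, x) (r2, x) := by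
  rw [dyckGrid, fromRel_adj]
  refine ⟨?_, Or.inl (Or.inl (Or.inr ⟨rfl, hr⟩))⟩
  intro hEq
  have h2 : r1 = r2 := congrArg Prod.fst hEq
  omega

include hk in
lemma row_lt (i' : Fin m) (s : ℕ) (hs : s < k) : i'.val * k + s < k * m := by
  have h1 : i'.val + 1 ≤ m := i'.isLt
  have h2 : (i'.val + 1) * k ≤ m * k := Nat.mul_le_mul_right k h1
  calc i'.val * k + s < i'.val * k + k := by omega
  _ = (i'.val + 1) * k := by ring
  _ ≤ m * k := h2
  _ = k * m := by ring

include hm hk in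
lemma BB_key (ha : a < k) (hb : b < k) (u : Fin m × ZMod (4*m*(1+h+c)))
    (p : Fin (k*m) × ZMod (4*(k*m)*(1+h+c))) (hp : p ∈ BB h c m k a b u) :
    ((p.1:ℕ))/k = u.1.val ∧
      ((p.2.val + (k-1)) % (4*(k*m)*(1+h+c))) / k = u.2.val := by
  have hcol : ∀ t, t < k → p.2 = wcol h c m k u.2 t →
      ((p.2.val + (k-1)) % (4*(k*m)*(1+h+c))) / k = u.2.val := by
    intro t ht hpt
    rw [hpt, gval h c m k hm hk u.2 t ht, Nat.mul_add_div (by omega), Nat.div_eq_of_lt ht,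
      add_zero]
  rcases hp with ⟨hrow, t, ht, hpt⟩ | ⟨hrow, hpt⟩ | ⟨hu0, hrow, hpt⟩
  · refine ⟨?_, hcol t ht hpt⟩
    rw [hrow, mul_comm, Nat.mul_add_div (by omega), Nat.div_eq_of_lt ha, add_zero]
  · exact ⟨hrow, hcol b hb hpt⟩
  · refine ⟨by rw [hrow, hu0], hcol (k-1-b) (by omega) hpt⟩

include hm hk in
lemma BB_res (ha : a < k) (hb : b < k) (u : Fin m × ZMod (4*m*(1+h+c)))
    (p : Fin (k*m) × ZMod (4*(k*m)*(1+h+c))) (hp : p ∈ BB h c m k a b u) :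
    ((p.1:ℕ)) % k = a ∨
      ((p.2.val + (k-1)) % (4*(k*m)*(1+h+c))) % k = b ∨
      ((p.2.val + (k-1)) % (4*(k*m)*(1+h+c))) % k = k-1-b := by
  rcases hp with ⟨hrow, t, ht, hpt⟩ | ⟨hrow, hpt⟩ | ⟨hu0, hrow, hpt⟩
  · left
    rw [hrow, mul_comm, Nat.mul_add_mod, Nat.mod_eq_of_lt ha]
  · right; left
    rw [hpt, gval h c m k hm hk u.2 b hb, Nat.mul_add_mod, Nat.mod_eq_of_lt hb]
  · right; right
    rw [hpt, gval h c m k hm hk u.2 (k-1-b) (by omega), Nat.mul_add_mod,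
      Nat.mod_eq_of_lt (by omega)]

include hk in
lemma BB_nonempty (ha : a < k) (hb : b < k) (u : Fin m × ZMod (4*m*(1+h+c))) :
    (BB h c m k a b u).Nonempty := by
  refine ⟨(⟨u.1.val * k + a, row_lt m k hk u.1 a ha⟩, wcol h c m k u.2 b), ?_⟩
  exact Or.inl ⟨rfl, b, hb, rfl⟩

include hm hk in
lemma BB_disjoint (ha : a < k) (hb : b < k) (u v : Fin m × ZMod (4*m*(1+h+c)))
    (huv : u ≠ v) : Disjoint (BB h c m k a b u) (BB h c m k a b v) := by
  haveI : NeZero (4*m*(1+h+c)) := ⟨by positivity⟩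
  rw [Set.disjoint_left]
  intro p hpu hpv
  obtain ⟨h1, h2⟩ := BB_key h c m k a b hm hk ha hb u p hpu
  obtain ⟨h3, h4⟩ := BB_key h c m k a b hm hk ha hb v p hpv
  apply huv
  have e1 : u.1 = v.1 := Fin.ext (h1 ▸ h3 ▸ rfl)
  have e2 : u.2 = v.2 := ZMod.val_injective _ (h2 ▸ h4 ▸ rfl)
  exact Prod.ext e1 e2

include hk in
lemma divEq' (q s : ℕ) (h1 : q*k ≤ s) (h2 : s < q*k + k) : s / k = q :=
  Nat.div_eq_of_lt_le h1 (by rw [Nat.succ_mul]; exact h2)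

include hk in
lemma divBounds' (q r : ℕ) (h : r / k = q) : q*k ≤ r ∧ r < q*k + k := by
  rw [← h]
  refine ⟨Nat.div_mul_le_self r k, ?_⟩
  calc r = k*(r/k) + r%k := (Nat.div_add_mod r k).symm
  _ < k*(r/k) + k := Nat.add_lt_add_left (Nat.mod_lt r (by omega)) _
  _ = r/k*k + k := by ring

include hm hk in
lemma reach_horiz (P : Set (Fin (k*m) × ZMod (4*(k*m)*(1+h+c)))) (r : Fin (k*m))
    (j' : ZMod (4*m*(1+h+c))) (t1 t2 : ℕ) (ht : t1 ≤ t2)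
    (hmem : ∀ t, t1 ≤ t → t ≤ t2 → (r, wcol h c m k j' t) ∈ P) :
    ∀ (p q : ↥P), (p : Fin (k*m) × ZMod (4*(k*m)*(1+h+c))) = (r, wcol h c m k j' t1) →
      (q : Fin (k*m) × ZMod (4*(k*m)*(1+h+c))) = (r, wcol h c m k j' t2) →
    ((dyckGrid h c (k*m)).induce P).Reachable p q := by
  intro p q hp hq
  apply reach_chain _ P (fun i => (r, wcol h c m k j' (t1+i))) (t2-t1)
  · intro i hi; exact hmem (t1+i) (by omega) (by omega)
  · intro i _
    show (dyckGrid h c (k*m)).Adj (r, wcol h c m k j' (t1+i)) (r, wcol h c m k j' (t1+i+1))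
    rw [show t1+i+1 = (t1+i)+1 from rfl, wcol_succ h c m k j' (t1+i)]
    exact adj_horiz h c m k hm hk r _
  · rw [hp]; norm_num
  · rw [hq]; congr 2; omega

include hm hk in
lemma reach_vert (P : Set (Fin (k*m) × ZMod (4*(k*m)*(1+h+c))))
    (x : ZMod (4*(k*m)*(1+h+c))) (r1 r2 : ℕ) (hr : r1 ≤ r2) (h2 : r2 < k*m)
    (hmem : ∀ ri (hri : ri < k*m), r1 ≤ ri → ri ≤ r2 → ((⟨ri, hri⟩ : Fin (k*m)), x) ∈ P) :
    ∀ (p q : ↥P), (p : Fin (k*m) × ZMod (4*(k*m)*(1+h+c))) = (⟨r1, by omega⟩, x) →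
      (q : Fin (k*m) × ZMod (4*(k*m)*(1+h+c))) = (⟨r2, h2⟩, x) →
    ((dyckGrid h c (k*m)).induce P).Reachable p q := by
  have hkm : 0 < k*m := by
    have := Nat.mul_le_mul hk hm
    omega
  intro p q hp hq
  apply reach_chain _ P (fun i => ((⟨(r1+i) % (k*m), Nat.mod_lt _ hkm⟩ : Fin (k*m)), x)) (r2-r1)
  · intro i hi
    have hlt : r1+i < k*m := by omega
    have hfe : (⟨(r1+i) % (k*m), Nat.mod_lt _ hkm⟩ : Fin (k*m)) = ⟨r1+i, hlt⟩ :=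
      Fin.ext (Nat.mod_eq_of_lt hlt)
    rw [hfe]
    exact hmem (r1+i) hlt (by omega) (by omega)
  · intro i hi
    have hlt : r1+i+1 < k*m := by omega
    have hfe : (⟨(r1+i) % (k*m), Nat.mod_lt _ hkm⟩ : Fin (k*m)) = ⟨r1+i, by omega⟩ :=
      Fin.ext (Nat.mod_eq_of_lt (by omega))
    have hfe2 : (⟨(r1+(i+1)) % (k*m), Nat.mod_lt _ hkm⟩ : Fin (k*m)) = ⟨r1+i+1, hlt⟩ :=
      Fin.ext (by rw [show r1+(i+1) = r1+i+1 from rfl]; exact Nat.mod_eq_of_lt hlt)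
    show (dyckGrid h c (k*m)).Adj _ _
    rw [hfe, hfe2]
    exact adj_vert h c m k _ _ rfl x
  · rw [hp]
    have : (r1+0) % (k*m) = r1 := by rw [Nat.add_zero]; exact Nat.mod_eq_of_lt (by omega)
    exact Prod.ext (Fin.ext this.symm) rfl
  · rw [hq]
    have : (r1+(r2-r1)) % (k*m) = r2 := by rw [show r1+(r2-r1) = r2 by omega]; exact Nat.mod_eq_of_lt h2
    exact Prod.ext (Fin.ext this.symm) rfl

include hm hk in
lemma BB_connected (ha : a < k) (hb : b < k) (u : Fin m × ZMod (4*m*(1+h+c))) :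
    ((dyckGrid h c (k*m)).induce (BB h c m k a b u)).Connected := by
  set P : Set (Fin (k*m) × ZMod (4*(k*m)*(1+h+c))) := BB h c m k a b u with hP
  have hkm : 0 < k*m := by
    have := Nat.mul_le_mul hk hm; omega
  set q := u.1.val with hq
  have hqm : q < m := u.1.isLt
  have hra : q * k + a < k * m := row_lt m k hk u.1 a ha
  set rowA : Fin (k*m) := ⟨q * k + a, hra⟩ with hrowA
  set z : Fin (k*m) × ZMod (4*(k*m)*(1+h+c)) := (rowA, wcol h c m k u.2 b) with hzdef
  have hz : z ∈ P := Or.inl ⟨rfl, b, hb, rfl⟩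
  -- membership helpers
  have memRow : ∀ t, t < k → (rowA, wcol h c m k u.2 t) ∈ P :=
    fun t ht => Or.inl ⟨rfl, t, ht, rfl⟩
  have memCol : ∀ s (hs : s < k*m), q*k ≤ s → s < q*k + k →
      ((⟨s, hs⟩ : Fin (k*m)), wcol h c m k u.2 b) ∈ P := by
    intro s hs h1 h2
    exact Or.inr (Or.inl ⟨divEq' k hk q s h1 h2, rfl⟩)
  have main : ∀ (p : ↥P), ((dyckGrid h c (k*m)).induce P).Reachable p ⟨z, hz⟩ := by
    rintro ⟨p, hp⟩
    rcases hp with ⟨hrow, t, ht, hpt⟩ | ⟨hrow, hpt⟩ | ⟨hu0, hrow, hpt⟩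
    · -- row part
      have hp1 : p.1 = rowA := Fin.ext hrow
      rcases le_or_gt t b with htb | hbt
      · exact reach_horiz h c m k hm hk P rowA u.2 t b htb
          (fun s h1 h2 => memRow s (by omega)) _ _
          (by show p = _; rw [← hp1, ← hpt]) rfl
      · exact (reach_horiz h c m k hm hk P rowA u.2 b t (by omega)
          (fun s h1 h2 => memRow s (by omega)) _ _
          rfl (by show p = _; rw [← hp1, ← hpt])).symm
    · -- column part
      obtain ⟨hb1, hb2⟩ := divBounds' k hk q (p.1 : ℕ) hrow
      have hp1 : p = ((⟨(p.1:ℕ), p.1.isLt⟩ : Fin (k*m)), wcol h c m k u.2 b) := by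
        rw [← hpt]
      rcases le_or_gt (p.1 : ℕ) (q*k + a) with hle | hlt
      · exact reach_vert h c m k hm hk P (wcol h c m k u.2 b) (p.1:ℕ) (q*k+a) hle hra
          (fun ri hri hr1 hr2 => memCol ri hri (le_trans hb1 hr1) (by omega)) _ _
          (by show p = _; exact hp1) rfl
      · exact (reach_vert h c m k hm hk P (wcol h c m k u.2 b) (q*k+a) (p.1:ℕ) (by omega)
          p.1.isLt
          (fun ri hri hr1 hr2 => memCol ri hri (by omega) (lt_of_le_of_lt hr2 hb2)) _ _
          rfl (by show p = _; exact hp1)).symm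
    · -- extra part
      have hq0 : q = 0 := hu0
      obtain ⟨hb1, hb2⟩ := divBounds' k hk 0 (p.1 : ℕ) hrow
      have hak : a < k*m := by omega
      have memExtra : ∀ s (hs : s < k*m), s < k →
          ((⟨s, hs⟩ : Fin (k*m)), wcol h c m k u.2 (k-1-b)) ∈ P := by
        intro s hs hsk
        exact Or.inr (Or.inr ⟨hu0, Nat.div_eq_of_lt hsk, rfl⟩)
      have hmidmem : ((⟨a, hak⟩ : Fin (k*m)), wcol h c m k u.2 (k-1-b)) ∈ P :=
        memExtra a hak ha
      have hp1 : p = ((⟨(p.1:ℕ), p.1.isLt⟩ : Fin (k*m)), wcol h c m k u.2 (k-1-b)) := by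
        rw [← hpt]
      have step1 : ((dyckGrid h c (k*m)).induce P).Reachable
          ⟨p, Or.inr (Or.inr ⟨hu0, hrow, hpt⟩)⟩ ⟨_, hmidmem⟩ := by
        rcases le_or_gt (p.1 : ℕ) a with hle | hlt
        · exact reach_vert h c m k hm hk P (wcol h c m k u.2 (k-1-b)) (p.1:ℕ) a hle hak
            (fun ri hri h1 h2 => memExtra ri hri (by omega)) _ _ (by show p = _; exact hp1) rfl
        · exact (reach_vert h c m k hm hk P (wcol h c m k u.2 (k-1-b)) a (p.1:ℕ) (by omega)
            p.1.isLt
            (fun ri hri h1 h2 => memExtra ri hri (by omega)) _ _ rfl (by show p = _; exact hp1)).symm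
      have hrAa : rowA = (⟨a, hak⟩ : Fin (k*m)) := Fin.ext (by rw [hrowA]; simp [hq0])
      have memRow' : ∀ t, t < k → ((⟨a, hak⟩ : Fin (k*m)), wcol h c m k u.2 t) ∈ P := by
        intro t ht
        rw [← hrAa]; exact memRow t ht
      have step2 : ((dyckGrid h c (k*m)).induce P).Reachable
          ⟨_, hmidmem⟩ ⟨z, hz⟩ := by
        have hzz : z = ((⟨a, hak⟩ : Fin (k*m)), wcol h c m k u.2 b) := by
          rw [hzdef, hrAa]
        rcases le_or_gt (k-1-b) b with hle | hlt
        · exact reach_horiz h c m k hm hk P (⟨a, hak⟩ : Fin (k*m)) u.2 (k-1-b) b hle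
            (fun s h1 h2 => memRow' s (by omega)) _ _ rfl (by show z = _; exact hzz)
        · exact (reach_horiz h c m k hm hk P (⟨a, hak⟩ : Fin (k*m)) u.2 b (k-1-b) (by omega)
            (fun s h1 h2 => memRow' s (by omega)) _ _ (by show z = _; exact hzz) rfl).symm
      exact step1.trans step2
  rw [connected_iff]
  refine ⟨fun p q => (main p).trans (main q).symm, ⟨⟨z, hz⟩⟩⟩

include hm hk in
lemma wcol_top (j' : ZMod (4*m*(1+h+c))) : wcol h c m k (j'+1) 0 = wcol h c m k j' k := by
  haveI : NeZero (4*m*(1+h+c)) := ⟨by positivity⟩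
  haveI : Fact (1 < 4*m*(1+h+c)) := ⟨by nlinarith⟩
  have hval : (j'+1).val = (j'.val + 1) % (4*m*(1+h+c)) := by
    rw [ZMod.val_add, ZMod.val_one]
  rw [wcol, wcol, hval]
  have hz := cast_mul_mod h c m k (j'.val+1)
  push_cast at hz ⊢
  linear_combination hz

lemma castN (x : ℕ) :
    ((x + 4*(k*m)*(1+h+c) : ℕ) : ZMod (4*(k*m)*(1+h+c))) = (x : ZMod (4*(k*m)*(1+h+c))) := by
  rw [Nat.cast_add, ZMod.natCast_self, add_zero]

include hm hk in
lemma wcol_ne (j1 j2 : ZMod (4*m*(1+h+c))) (t1 t2 : ℕ) (h1 : t1 < k) (h2 : t2 < k)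
    (hne : k * j1.val + t1 ≠ k * j2.val + t2) :
    wcol h c m k j1 t1 ≠ wcol h c m k j2 t2 := by
  intro hEq
  apply hne
  rw [← gval h c m k hm hk j1 t1 h1, ← gval h c m k hm hk j2 t2 h2, hEq]

include hm hk in
lemma BB_edge_one (ha : a < k) (hb : b < k) (u v : Fin m × ZMod (4*m*(1+h+c)))
    (hrel : cylRel m (4 * m * (1 + h + c)) u v ∨
    ((u.1 : ℕ) = 0 ∧ (v.1 : ℕ) = 0 ∧
      ((∃ pos : ℕ, 2 ≤ pos ∧ pos ≤ h + 1 ∧ ∃ j : ℕ, 1 ≤ j ∧ j ≤ m ∧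
          ((u.2 = ((4 * m * (pos - 1) + j : ℕ) : ZMod (4 * m * (1 + h + c))) ∧
            v.2 = ((4 * m * (pos - 1) + 3 * m - j + 1 : ℕ) : ZMod (4 * m * (1 + h + c)))) ∨
           (u.2 = ((4 * m * (pos - 1) + m + j : ℕ) : ZMod (4 * m * (1 + h + c))) ∧
            v.2 = ((4 * m * (pos - 1) + 4 * m - j + 1 : ℕ) : ZMod (4 * m * (1 + h + c)))))) ∨
       (∃ pos : ℕ, h + 2 ≤ pos ∧ pos ≤ h + 1 + c ∧ ∃ j : ℕ, 1 ≤ j ∧ j ≤ 2 * m ∧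
          (u.2 = ((4 * m * (pos - 1) + j : ℕ) : ZMod (4 * m * (1 + h + c))) ∧
           v.2 = ((4 * m * (pos - 1) + 2 * m + j : ℕ) : ZMod (4 * m * (1 + h + c)))))))) :
    ∃ x ∈ BB h c m k a b u, ∃ y ∈ BB h c m k a b v, (dyckGrid h c (k*m)).Adj x y := by
  haveI : NeZero (4*m*(1+h+c)) := ⟨by positivity⟩
  have hkm : 0 < k*m := by have := Nat.mul_le_mul hk hm; omega
  have hNk : k ≤ 4*(k*m)*(1+h+c) := hkN h c m k hm
  have hMexp : 4*m*(1+h+c) = 4*m + 4*m*h + 4*m*c := by ring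
  have hNexp : 4*(k*m)*(1+h+c) = 4*(k*m) + 4*(k*m)*h + 4*(k*m)*c := by ring
  rcases hrel with (⟨hf, hs⟩ | ⟨hs, hf⟩) | ⟨hu0, hv0, hrest⟩
  · -- horizontal
    have hx : ((⟨u.1.val*k+a, row_lt m k hk u.1 a ha⟩ : Fin (k*m)), wcol h c m k u.2 (k-1))
        ∈ BB h c m k a b u := Or.inl ⟨rfl, k-1, by omega, rfl⟩
    have hy : ((⟨u.1.val*k+a, row_lt m k hk u.1 a ha⟩ : Fin (k*m)), wcol h c m k v.2 0)
        ∈ BB h c m k a b v := Or.inl ⟨by rw [← hf], 0, by omega, rfl⟩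
    refine ⟨_, hx, _, hy, ?_⟩
    have e := wcol_succ h c m k u.2 (k-1)
    rw [show (k-1)+1 = k by omega] at e
    have e2 : wcol h c m k v.2 0 = wcol h c m k u.2 (k-1) + 1 := by
      rw [hs, wcol_top h c m k hm hk, e]
    rw [e2]
    exact adj_horiz h c m k hm hk _ _
  · -- vertical
    have hx : ((⟨u.1.val*k+(k-1), row_lt m k hk u.1 (k-1) (by omega)⟩ : Fin (k*m)),
        wcol h c m k u.2 b) ∈ BB h c m k a b u :=
      Or.inr (Or.inl ⟨divEq' k hk u.1.val (u.1.val*k+(k-1)) (by omega) (by omega), rfl⟩)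
    have hy : ((⟨v.1.val*k, row_lt m k hk v.1 0 (by omega)⟩ : Fin (k*m)),
        wcol h c m k v.2 b) ∈ BB h c m k a b v :=
      Or.inr (Or.inl ⟨divEq' k hk v.1.val (v.1.val*k) (by omega) (by omega), rfl⟩)
    refine ⟨_, hx, _, hy, ?_⟩
    rw [← hs]
    apply adj_vert
    show u.1.val*k+(k-1) + 1 = v.1.val*k
    have e1 : (u.1.val+1)*k = u.1.val*k + k := by ring
    have e2 : (u.1.val+1)*k = v.1.val*k := by rw [hf]
    omega
  · -- handles and cross-caps
    have hrow0 : ((0:ℕ)) / k = (0:ℕ) := Nat.zero_div k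
    have hu0' : (0:ℕ)/k = u.1.val := by rw [hrow0, hu0]
    have hv0' : v.1.val = 0 := hv0
    have hzlt : (0:ℕ) < k*m := hkm
    rcases hrest with ⟨pos, hp2, hph, j₀, hj1, hjm, hcase⟩ | ⟨pos, hp2, hph, j₀, hj1, hjm, hc1, hc2⟩
    · -- handle
      obtain ⟨ι, rfl⟩ : ∃ ι, j₀ = ι + 1 := ⟨j₀ - 1, by omega⟩
      obtain ⟨P1, hP1⟩ : ∃ P1, pos - 1 = P1 := ⟨pos - 1, rfl⟩
      have hP1h : P1 ≤ h := by omega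
      have hbig1 : 4*m*P1 ≤ 4*m*h := Nat.mul_le_mul_left (4*m) hP1h
      have hbigk : 4*(k*m)*P1 ≤ 4*(k*m)*h := Nat.mul_le_mul_left (4*(k*m)) hP1h
      have hJle : k*(ι+1) ≤ k*m := Nat.mul_le_mul_left k hjm
      have hJexp : k*(ι+1) = k*ι + k := by ring
      rcases hcase with ⟨hc1, hc2⟩ | ⟨hc1, hc2⟩
      · -- first handle family
        obtain ⟨T, hT⟩ : ∃ T, T + (ι+1) = 3*m := ⟨3*m - (ι+1), by omega⟩
        have ec2 : 4*m*(pos-1) + 3*m - (ι+1) + 1 = 4*m*P1 + T + 1 := by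
          rw [hP1]; omega
        rw [hP1] at hc1
        rw [ec2] at hc2
        have hc1M : 4*m*P1 + (ι+1) < 4*m*(1+h+c) := by omega
        have hc2M : 4*m*P1 + T + 1 < 4*m*(1+h+c) := by omega
        have hval1 : u.2.val = 4*m*P1 + (ι+1) := by
          rw [hc1, ZMod.val_natCast, Nat.mod_eq_of_lt hc1M]
        have hval2 : v.2.val = 4*m*P1 + T + 1 := by
          rw [hc2, ZMod.val_natCast, Nat.mod_eq_of_lt hc2M]
        have hx : ((⟨0, hzlt⟩ : Fin (k*m)), wcol h c m k u.2 b) ∈ BB h c m k a b u :=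
          Or.inr (Or.inl ⟨hu0', rfl⟩)
        have hy : ((⟨0, hzlt⟩ : Fin (k*m)), wcol h c m k v.2 (k-1-b)) ∈ BB h c m k a b v :=
          Or.inr (Or.inr ⟨hv0', hrow0, rfl⟩)
        refine ⟨_, hx, _, hy, ?_⟩
        rw [dyckGrid, fromRel_adj]
        constructor
        · intro hEq
          have hsnd : wcol h c m k u.2 b = wcol h c m k v.2 (k-1-b) := congrArg Prod.snd hEq
          refine wcol_ne h c m k hm hk u.2 v.2 b (k-1-b) hb (by omega) ?_ hsnd
          rw [hval1, hval2]
          have m1 : k*(4*m*P1 + (ι+1)) = k*(4*m*P1) + k*ι + k := by ring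
          have m2 : k*(4*m*P1 + T + 1) = k*(4*m*P1) + k*T + k := by ring
          have m6 : k*(ι+1) ≤ k*T := Nat.mul_le_mul_left k (by omega)
          omega
        · refine Or.inl (Or.inr ⟨rfl, rfl, Or.inl ⟨pos, hp2, hph, k*ι+b+1, by omega, ?_,
            Or.inl ⟨?_, ?_⟩⟩⟩)
          · omega
          · rw [hc1, wcol_natCast, hP1]
            have eb : 4*(k*m)*P1 + (k*ι+b+1) + 4*(k*m)*(1+h+c)
                = k*(4*m*P1+(ι+1)) + b + 1 + (4*(k*m)*(1+h+c) - k) := by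
              have m1 : k*(4*m*P1+(ι+1)) = 4*(k*m)*P1 + k*ι + k := by ring
              omega
            rw [← eb]
            exact castN h c m k _
          · rw [hc2, wcol_natCast, hP1]
            have eb : 4*(k*m)*P1 + 3*(k*m) - (k*ι+b+1) + 1 + 4*(k*m)*(1+h+c)
                = k*(4*m*P1+T+1) + (k-1-b) + 1 + (4*(k*m)*(1+h+c) - k) := by
              have m2 : k*(4*m*P1+T+1) = 4*(k*m)*P1 + k*T + k := by ring
              have m3 : k*T + k*(ι+1) = k*(3*m) := by rw [← Nat.left_distrib, hT]
              have m4 : k*(3*m) = 3*(k*m) := by ring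
              omega
            rw [← eb]
            exact castN h c m k _
      · -- second handle family
        obtain ⟨T, hT⟩ : ∃ T, T + (ι+1) = 4*m := ⟨4*m - (ι+1), by omega⟩
        have ec2 : 4*m*(pos-1) + 4*m - (ι+1) + 1 = 4*m*P1 + T + 1 := by
          rw [hP1]; omega
        rw [hP1] at hc1
        rw [ec2] at hc2
        have hc1M : 4*m*P1 + m + (ι+1) < 4*m*(1+h+c) := by omega
        have hc2M : 4*m*P1 + T + 1 ≤ 4*m*(1+h+c) := by omega
        have hval1 : u.2.val = 4*m*P1 + m + (ι+1) := by
          rw [hc1, ZMod.val_natCast, Nat.mod_eq_of_lt hc1M]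
        have hval2 : v.2.val = (4*m*P1 + T + 1) % (4*m*(1+h+c)) := by
          rw [hc2, ZMod.val_natCast]
        have hval2' : v.2.val = 4*m*P1 + T + 1 ∨ v.2.val = 0 := by
          rcases Nat.lt_or_ge (4*m*P1 + T + 1) (4*m*(1+h+c)) with H | H
          · left; rw [hval2, Nat.mod_eq_of_lt H]
          · right; rw [hval2, show 4*m*P1 + T + 1 = 4*m*(1+h+c) by omega, Nat.mod_self]
        have hx : ((⟨0, hzlt⟩ : Fin (k*m)), wcol h c m k u.2 b) ∈ BB h c m k a b u :=
          Or.inr (Or.inl ⟨hu0', rfl⟩)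
        have hy : ((⟨0, hzlt⟩ : Fin (k*m)), wcol h c m k v.2 (k-1-b)) ∈ BB h c m k a b v :=
          Or.inr (Or.inr ⟨hv0', hrow0, rfl⟩)
        refine ⟨_, hx, _, hy, ?_⟩
        rw [dyckGrid, fromRel_adj]
        constructor
        · intro hEq
          have hsnd : wcol h c m k u.2 b = wcol h c m k v.2 (k-1-b) := congrArg Prod.snd hEq
          refine wcol_ne h c m k hm hk u.2 v.2 b (k-1-b) hb (by omega) ?_ hsnd
          have m1 : k*(4*m*P1 + m + (ι+1)) = k*(4*m*P1) + k*m + k*ι + k := by ring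
          have m2 : k*(4*m*P1 + T + 1) = k*(4*m*P1) + k*T + k := by ring
          have m6 : k*(m+ι+1) ≤ k*T := Nat.mul_le_mul_left k (by omega)
          have m7 : k*(m+ι+1) = k*m + k*ι + k := by ring
          have m5 : k*1 ≤ k*(4*m*P1 + m + (ι+1)) :=
            Nat.mul_le_mul_left k (by omega)
          rcases hval2' with H | H
          · rw [hval1, H]; omega
          · rw [hval1, H]; omega
        · refine Or.inl (Or.inr ⟨rfl, rfl, Or.inl ⟨pos, hp2, hph, k*ι+b+1, by omega, ?_,
            Or.inr ⟨?_, ?_⟩⟩⟩)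
          · omega
          · rw [hc1, wcol_natCast, hP1]
            have eb : 4*(k*m)*P1 + (k*m) + (k*ι+b+1) + 4*(k*m)*(1+h+c)
                = k*(4*m*P1+m+(ι+1)) + b + 1 + (4*(k*m)*(1+h+c) - k) := by
              have m1 : k*(4*m*P1+m+(ι+1)) = 4*(k*m)*P1 + (k*m) + k*ι + k := by ring
              omega
            rw [← eb]
            exact castN h c m k _
          · rw [hc2, wcol_natCast, hP1]
            have eb : 4*(k*m)*P1 + 4*(k*m) - (k*ι+b+1) + 1 + 4*(k*m)*(1+h+c)
                = k*(4*m*P1+T+1) + (k-1-b) + 1 + (4*(k*m)*(1+h+c) - k) := by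
              have m2 : k*(4*m*P1+T+1) = 4*(k*m)*P1 + k*T + k := by ring
              have m3 : k*T + k*(ι+1) = k*(4*m) := by rw [← Nat.left_distrib, hT]
              have m4 : k*(4*m) = 4*(k*m) := by ring
              omega
            rw [← eb]
            exact castN h c m k _
    · -- cross-cap
      obtain ⟨ι, rfl⟩ : ∃ ι, j₀ = ι + 1 := ⟨j₀ - 1, by omega⟩
      obtain ⟨P1, hP1⟩ : ∃ P1, pos - 1 = P1 := ⟨pos - 1, rfl⟩
      have hP1h : P1 ≤ h + c := by omega
      have hbig1 : 4*m*P1 ≤ 4*m*(h+c) := Nat.mul_le_mul_left (4*m) hP1h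
      have hMexp2 : 4*m*(h+c) = 4*m*h + 4*m*c := by ring
      have hJle : k*(ι+1) ≤ k*(2*m) := Nat.mul_le_mul_left k hjm
      have hJexp : k*(ι+1) = k*ι + k := by ring
      have h2km : k*(2*m) = 2*(k*m) := by ring
      rw [hP1] at hc1 hc2
      have hc1M : 4*m*P1 + (ι+1) < 4*m*(1+h+c) := by omega
      have hc2M : 4*m*P1 + 2*m + (ι+1) ≤ 4*m*(1+h+c) := by omega
      have hval1 : u.2.val = 4*m*P1 + (ι+1) := by
        rw [hc1, ZMod.val_natCast, Nat.mod_eq_of_lt hc1M]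
      have hval2' : v.2.val = 4*m*P1 + 2*m + (ι+1) ∨ v.2.val = 0 := by
        rcases Nat.lt_or_ge (4*m*P1 + 2*m + (ι+1)) (4*m*(1+h+c)) with H | H
        · left; rw [hc2, ZMod.val_natCast, Nat.mod_eq_of_lt H]
        · right; rw [hc2, ZMod.val_natCast,
            show 4*m*P1 + 2*m + (ι+1) = 4*m*(1+h+c) by omega, Nat.mod_self]
      have hx : ((⟨0, hzlt⟩ : Fin (k*m)), wcol h c m k u.2 b) ∈ BB h c m k a b u :=
        Or.inr (Or.inl ⟨hu0', rfl⟩)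
      have hy : ((⟨0, hzlt⟩ : Fin (k*m)), wcol h c m k v.2 b) ∈ BB h c m k a b v :=
        Or.inr (Or.inl ⟨by rw [hrow0, hv0'], rfl⟩)
      refine ⟨_, hx, _, hy, ?_⟩
      rw [dyckGrid, fromRel_adj]
      constructor
      · intro hEq
        have hsnd : wcol h c m k u.2 b = wcol h c m k v.2 b := congrArg Prod.snd hEq
        refine wcol_ne h c m k hm hk u.2 v.2 b b hb hb ?_ hsnd
        have m1 : k*(4*m*P1 + (ι+1)) = k*(4*m*P1) + k*ι + k := by ring
        have m2 : k*(4*m*P1 + 2*m + (ι+1)) = k*(4*m*P1) + k*(2*m) + k*ι + k := by ring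
        have m6 : k*1 ≤ k*(2*m) := Nat.mul_le_mul_left k (by omega)
        have m5 : k*1 ≤ k*(4*m*P1 + (ι+1)) := Nat.mul_le_mul_left k (by omega)
        rcases hval2' with H | H
        · rw [hval1, H]; omega
        · rw [hval1, H]; omega
      · refine Or.inl (Or.inr ⟨rfl, rfl, Or.inr ⟨pos, hp2, hph, k*ι+b+1, by omega, ?_, ?_, ?_⟩⟩)
        · omega
        · rw [hc1, wcol_natCast]
          have eb : 4*(k*m)*(pos-1) + (k*ι+b+1) + 4*(k*m)*(1+h+c)
              = k*(4*m*P1+(ι+1)) + b + 1 + (4*(k*m)*(1+h+c) - k) := by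
            rw [hP1]
            have m1 : k*(4*m*P1+(ι+1)) = 4*(k*m)*P1 + k*ι + k := by ring
            omega
          rw [← eb]
          exact castN h c m k _
        · rw [hc2, wcol_natCast]
          have eb : 4*(k*m)*(pos-1) + 2*(k*m) + (k*ι+b+1) + 4*(k*m)*(1+h+c)
              = k*(4*m*P1+2*m+(ι+1)) + b + 1 + (4*(k*m)*(1+h+c) - k) := by
            rw [hP1]
            have m1 : k*(4*m*P1+2*m+(ι+1)) = 4*(k*m)*P1 + 2*(k*m) + k*ι + k := by ring
            omega
          rw [← eb]
          exact castN h c m k _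

include hm hk in
lemma BB_edges (ha : a < k) (hb : b < k) (u v : Fin m × ZMod (4*m*(1+h+c)))
    (huv : (dyckGrid h c m).Adj u v) :
    ∃ x ∈ BB h c m k a b u, ∃ y ∈ BB h c m k a b v, (dyckGrid h c (k*m)).Adj x y := by
  rw [dyckGrid, fromRel_adj] at huv
  obtain ⟨-, hrel | hrel⟩ := huv
  · exact BB_edge_one h c m k a b hm hk ha hb u v hrel
  · obtain ⟨x, hx, y, hy, hxy⟩ := BB_edge_one h c m k a b hm hk ha hb v u hrel
    exact ⟨y, hy, x, hx, hxy.symm⟩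

end Dyck

/-- Lemma 6.3, via Proposition 2.2. Let `h ∈ ℕ`, `c ∈ {0,1,2}`, `m ≥ 1`, and
let `H` be a graph that is a minor of the Dyck grid `D^{(h,c)}_m`.  Then for every `k ≥ 1`, every
`H`-cover `S` of `D^{(h,c)}_{km}` satisfies `2|S| ≥ k`. -/
theorem stmt_11 {V : Type*} [Fintype V] (h c : ℕ) (hc : c ≤ 2) (m : ℕ) (hm : 1 ≤ m)
    (H : SimpleGraph V) (hH : IsMinorOf H (dyckGrid h c m))
    (k : ℕ) (hk : 1 ≤ k)
    (S : Set (Fin (k * m) × ZMod (4 * (k * m) * (1 + h + c))))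
    (hcov : ¬ IsMinorOf H ((dyckGrid h c (k * m)).induce Sᶜ)) :
    k ≤ 2 * S.ncard := by
  classical
  by_contra hlt
  push_neg at hlt
  apply hcov
  have hNpos : 0 < 4*(k*m)*(1+h+c) := by
    have h1 : 1 ≤ k*m := by simpa using Nat.mul_le_mul hk hm
    have h2 : 1*1 ≤ (k*m)*(1+h+c) := Nat.mul_le_mul h1 (by omega)
    have h3 : 4*((k*m)*(1+h+c)) = 4*(k*m)*(1+h+c) := by ring
    omega
  haveI : NeZero (4*(k*m)*(1+h+c)) := ⟨hNpos.ne'⟩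
  have hSfin : S.Finite := S.toFinite
  have hcard : S.ncard = hSfin.toFinset.card := Set.ncard_eq_toFinset_card S hSfin
  -- choose the row residue `a`
  set Frow : Finset ℕ := hSfin.toFinset.image (fun p => (p.1 : ℕ) % k) with hFrow
  have hFrowcard : Frow.card < k := by
    have h1 : Frow.card ≤ hSfin.toFinset.card := by
      rw [hFrow]; exact Finset.card_image_le
    omega
  have hrowne : (Finset.range k \ Frow).Nonempty := by
    rw [← Finset.card_pos]
    have h2 := Finset.le_card_sdiff Frow (Finset.range k)
    rw [Finset.card_range] at h2
    omega
  obtain ⟨a, haa⟩ := hrowne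
  rw [Finset.mem_sdiff, Finset.mem_range] at haa
  obtain ⟨hak, haF⟩ := haa
  have haS : ∀ p ∈ S, (p.1 : ℕ) % k ≠ a := by
    intro p hp hpa
    exact haF (Finset.mem_image.mpr ⟨p, hSfin.mem_toFinset.mpr hp, hpa⟩)
  -- choose the column residue `b`
  set cres : (Fin (k*m) × ZMod (4*(k*m)*(1+h+c))) → ℕ :=
    fun p => ((p.2.val + (k-1)) % (4*(k*m)*(1+h+c))) % k with hcres
  set Fcol : Finset ℕ := hSfin.toFinset.image cres ∪ hSfin.toFinset.image (fun p => k-1-cres p)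
    with hFcol
  have hFcolcard : Fcol.card < k := by
    have h3 : Fcol.card ≤ hSfin.toFinset.card + hSfin.toFinset.card := by
      rw [hFcol]
      exact le_trans (Finset.card_union_le _ _)
        (Nat.add_le_add Finset.card_image_le Finset.card_image_le)
    omega
  have hcolne : (Finset.range k \ Fcol).Nonempty := by
    rw [← Finset.card_pos]
    have h2 := Finset.le_card_sdiff Fcol (Finset.range k)
    rw [Finset.card_range] at h2
    omega
  obtain ⟨b, hbb⟩ := hcolne
  rw [Finset.mem_sdiff, Finset.mem_range] at hbb
  obtain ⟨hbk, hbF⟩ := hbb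
  rw [Finset.mem_union] at hbF
  push_neg at hbF
  obtain ⟨hbF1, hbF2⟩ := hbF
  have hbS1 : ∀ p ∈ S, cres p ≠ b := by
    intro p hp hpb
    exact hbF1 (Finset.mem_image.mpr ⟨p, hSfin.mem_toFinset.mpr hp, hpb⟩)
  have hbS2 : ∀ p ∈ S, cres p ≠ k-1-b := by
    intro p hp hpb
    apply hbF2 (Finset.mem_image.mpr ⟨p, hSfin.mem_toFinset.mpr hp, ?_⟩)
    have hcl : cres p < k := Nat.mod_lt _ (by omega)
    omega
  -- the branch sets avoid `S`
  have hsub : ∀ u, BB h c m k a b u ⊆ Sᶜ := by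
    intro u p hp hpS
    rcases BB_res h c m k a b hm hk hak hbk u p hp with H | H | H
    · exact haS p hpS H
    · exact hbS1 p hpS H
    · exact hbS2 p hpS H
  have hminor2 : IsMinorOf (dyckGrid h c m) ((dyckGrid h c (k * m)).induce Sᶜ) :=
    isMinorOf_induce_of_sets (dyckGrid h c m) (dyckGrid h c (k*m)) Sᶜ
      (BB h c m k a b) hsub
      (fun u => BB_nonempty h c m k a b hk hak hbk u)
      (fun u v huv => BB_disjoint h c m k a b hm hk hak hbk u v huv)
      (fun u => BB_connected h c m k a b hm hk hak hbk u)
      (fun u v huv => BB_edges h c m k a b hm hk hak hbk u v huv)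
  exact hH.trans' hminor2
end
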